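/- Suppose φ ∈ M_n(JCB(V × W, M_m)) and there exists a net (φ_λ) of completely nuclear bilinear maps in M_n(N(V × W, M_m)) with ‖φ_λ‖_N ≤ C for all λ and φ_λ(v,w) → φ(v,w) for all v ∈ V, w ∈ W. Then φ is completely integral with ‖φ‖_I ≤ C. -/

import Mathlib

/- ## A lightweight framework for operator spaces (matrix norms, Ruan's axioms) -/

noncomputable section
open scoped TensorProduct

/-- The operator norm (`ℓ² → ℓ²`) of a rectangular complex scalar matrix. -/
def cnorm {m n : ℕ} (α : Matrix (Fin m) (Fin n) ℂ) : ℝ :=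
  ‖LinearMap.toContinuousLinearMap (Matrix.toEuclideanLin α)‖

/-- A (complex) vector space equipped with a family of "matrix norms", one on each
matrix level `M_n(X)`.  No axioms are imposed at this stage. -/
structure MatNormed where
  X : Type
  [grp : AddCommGroup X]
  [mod : Module ℂ X]
  N : (n : ℕ) → Matrix (Fin n) (Fin n) X → ℝ

attribute [instance] MatNormed.grp MatNormed.mod

/-- Ruan's axioms `M1`, `M2` together with the requirement that every level is a norm. -/
def RuanAxioms (M : MatNormed) : Prop :=
  (∀ (n : ℕ) (v : Matrix (Fin n) (Fin n) M.X), 0 ≤ M.N n v) ∧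
  (∀ (n : ℕ) (v w : Matrix (Fin n) (Fin n) M.X), M.N n (v + w) ≤ M.N n v + M.N n w) ∧
  (∀ (n : ℕ) (c : ℂ) (v : Matrix (Fin n) (Fin n) M.X), M.N n (c • v) = ‖c‖ * M.N n v) ∧
  (∀ (n : ℕ) (v : Matrix (Fin n) (Fin n) M.X), M.N n v = 0 → v = 0) ∧
  (∀ (n m : ℕ) (v : Matrix (Fin n) (Fin n) M.X) (w : Matrix (Fin m) (Fin m) M.X),
    M.N (n + m) (Matrix.reindex finSumFinEquiv finSumFinEquiv (Matrix.fromBlocks v 0 0 w)) =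
      max (M.N n v) (M.N m w)) ∧
  (∀ (n m : ℕ) (α : Matrix (Fin m) (Fin n) ℂ) (v : Matrix (Fin n) (Fin n) M.X)
      (β : Matrix (Fin n) (Fin m) ℂ),
    M.N m (fun i j => ∑ k, ∑ l, (α i k * β l j) • v k l) ≤ cnorm α * M.N n v * cnorm β)

/-- An operator space: matrix norms satisfying Ruan's axioms. -/
structure OpSpace extends MatNormed where
  ruan : RuanAxioms toMatNormed

/-- The underlying matrix-normed space of an operator space. -/
abbrev OpSpace.m (V : OpSpace) : MatNormed := V.toMatNormed

/-- Flattening `M_m(M_n(X)) → M_{mn}(X)`. -/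
def flat {X : Type} {m n : ℕ} (A : Matrix (Fin m) (Fin m) (Matrix (Fin n) (Fin n) X)) :
    Matrix (Fin (m * n)) (Fin (m * n)) X := fun p q =>
  A (finProdFinEquiv.symm p).1 (finProdFinEquiv.symm q).1
    (finProdFinEquiv.symm p).2 (finProdFinEquiv.symm q).2

/-- The scalars `ℂ` with their canonical operator space matrix norms. -/
abbrev scalarMN : MatNormed :=
  { X := ℂ, N := fun _ A => cnorm A }

/-- The matrix level `M_n(Z)` of a matrix-normed space, with its canonical matrix norms. -/
abbrev MatNormed.matLevel (Z : MatNormed) (n : ℕ) : MatNormed :=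
  { X := Matrix (Fin n) (Fin n) Z.X, N := fun k A => Z.N (k * n) (flat A) }

/-- A subspace of a matrix-normed space, with the inherited matrix norms. -/
abbrev subMN (V : MatNormed) (F : Submodule ℂ V.X) : MatNormed :=
  { X := ↥F, N := fun k v => V.N k (fun i j => ((v i j : V.X))) }

/-- Entrywise amplification of a (linear) map. -/
def lamp {V W : Type} (r : V → W) {k : ℕ} (v : Matrix (Fin k) (Fin k) V) :
    Matrix (Fin k) (Fin k) W := fun i j => r (v i j)

/-- `r` is completely bounded with constant `C`. -/
def CBWith (V W : MatNormed) (r : V.X → W.X) (C : ℝ) : Prop :=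
  0 ≤ C ∧ ∀ (k : ℕ) (v : Matrix (Fin k) (Fin k) V.X), W.N k (lamp r v) ≤ C * V.N k v

/-- Completely bounded linear maps. -/
def CompletelyBounded (V W : MatNormed) (r : V.X → W.X) : Prop :=
  IsLinearMap ℂ r ∧ ∃ C, CBWith V W r C

/-- The completely bounded norm. -/
def cbNorm (V W : MatNormed) (r : V.X → W.X) : ℝ := sInf {C | CBWith V W r C}

/-- A complete isometry. -/
def CompleteIsometry (V W : MatNormed) (j : V.X → W.X) : Prop :=
  IsLinearMap ℂ j ∧ ∀ (k : ℕ) (v : Matrix (Fin k) (Fin k) V.X), W.N k (lamp j v) = V.N k v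

/-- Bilinearity of a two-variable map. -/
def IsBilinMap {V W T : Type} [AddCommGroup V] [Module ℂ V] [AddCommGroup W] [Module ℂ W]
    [AddCommGroup T] [Module ℂ T] (φ : V → W → T) : Prop :=
  (∀ w, IsLinearMap ℂ (fun v => φ v w)) ∧ (∀ v, IsLinearMap ℂ (φ v))

/-- The "joint" amplification `φ_k : M_k × M_k → M_{k²}` of a bilinear map. -/
def jamp {V W Z : Type} (φ : V → W → Z) {k : ℕ}
    (v : Matrix (Fin k) (Fin k) V) (w : Matrix (Fin k) (Fin k) W) :
    Matrix (Fin (k * k)) (Fin (k * k)) Z := fun p q =>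
  φ (v (finProdFinEquiv.symm p).1 (finProdFinEquiv.symm q).1)
    (w (finProdFinEquiv.symm p).2 (finProdFinEquiv.symm q).2)

/-- `φ` is jointly completely bounded with constant `C`. -/
def JCBWith (V W Z : MatNormed) (φ : V.X → W.X → Z.X) (C : ℝ) : Prop :=
  0 ≤ C ∧ ∀ (k : ℕ) (v : Matrix (Fin k) (Fin k) V.X) (w : Matrix (Fin k) (Fin k) W.X),
    Z.N (k * k) (jamp φ v w) ≤ C * V.N k v * W.N k w

/-- Jointly completely bounded bilinear maps. -/
def JCB (V W Z : MatNormed) (φ : V.X → W.X → Z.X) : Prop :=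
  IsBilinMap φ ∧ ∃ C, JCBWith V W Z φ C

/-- The jointly completely bounded norm. -/
def jcbNorm (V W Z : MatNormed) (φ : V.X → W.X → Z.X) : ℝ := sInf {C | JCBWith V W Z φ C}

/-- The "multiplicative" amplification `φ_(k)` (using matrix multiplication). -/
def mamp {V W Z : Type} [AddCommMonoid Z] (φ : V → W → Z) {k : ℕ}
    (v : Matrix (Fin k) (Fin k) V) (w : Matrix (Fin k) (Fin k) W) :
    Matrix (Fin k) (Fin k) Z := fun i j => ∑ l, φ (v i l) (w l j)

/-- `φ` is multiplicatively bounded with constant `C`. -/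
def MBWith (V W Z : MatNormed) (φ : V.X → W.X → Z.X) (C : ℝ) : Prop :=
  0 ≤ C ∧ ∀ (k : ℕ) (v : Matrix (Fin k) (Fin k) V.X) (w : Matrix (Fin k) (Fin k) W.X),
    Z.N k (mamp φ v w) ≤ C * V.N k v * W.N k w

/-- Multiplicatively bounded bilinear maps. -/
def MB (V W Z : MatNormed) (φ : V.X → W.X → Z.X) : Prop :=
  IsBilinMap φ ∧ ∃ C, MBWith V W Z φ C

/-- The multiplicatively bounded norm. -/
def mbNorm (V W Z : MatNormed) (φ : V.X → W.X → Z.X) : ℝ := sInf {C | MBWith V W Z φ C}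

/-- Finite type bilinear maps `φ(v,w) = ∑ f i (v) * g i (w) • x i` with bounded functionals. -/
def FiniteType (V W Z : MatNormed) (φ : V.X → W.X → Z.X) : Prop :=
  ∃ (k : ℕ) (f : Fin k → (V.X →ₗ[ℂ] ℂ)) (g : Fin k → (W.X →ₗ[ℂ] ℂ)) (x : Fin k → Z.X),
    (∀ i, ∃ C, CBWith V scalarMN (f i) C) ∧ (∀ i, ∃ C, CBWith W scalarMN (g i) C) ∧
    ∀ v w, φ v w = ∑ i, (f i v * g i w) • x i

/- ## Duals -/

/-- Amplification pairing a `p × p` matrix of functionals with a `k × k` matrix of vectors. -/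
def dampl {V : Type} [AddCommGroup V] [Module ℂ V] {p k : ℕ}
    (f : Matrix (Fin p) (Fin p) (V →ₗ[ℂ] ℂ))
    (v : Matrix (Fin k) (Fin k) V) : Matrix (Fin (k * p)) (Fin (k * p)) ℂ :=
  flat (fun i j => Matrix.of fun a b => f a b (v i j))

/-- The norm of a matrix of functionals, i.e. the matrix norm of `M_p(V*)`
(equivalently the cb-norm of the associated map `V → M_p`). -/
def dualN (V : MatNormed) {p : ℕ} (f : Matrix (Fin p) (Fin p) (V.X →ₗ[ℂ] ℂ)) : ℝ :=
  sInf {C | 0 ≤ C ∧ ∀ (k : ℕ) (v : Matrix (Fin k) (Fin k) V.X),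
    cnorm (dampl f v) ≤ C * V.N k v}

/-- Norm of a row vector of scalars. -/
def rowNorm {k : ℕ} (α : Fin k → ℂ) : ℝ := cnorm (Matrix.of fun (_ : Fin 1) s => α s)

/-- Norm of a column vector of scalars. -/
def colNorm {k : ℕ} (β : Fin k → ℂ) : ℝ := cnorm (Matrix.of fun s (_ : Fin 1) => β s)

lemma cnorm_add_le {m n : ℕ} (A B : Matrix (Fin m) (Fin n) ℂ) :
    cnorm (A + B) ≤ cnorm A + cnorm B := by
  simp only [cnorm, map_add]; exact norm_add_le _ _

lemma cnorm_smul {m n : ℕ} (c : ℂ) (A : Matrix (Fin m) (Fin n) ℂ) :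
    cnorm (c • A) = ‖c‖ * cnorm A := by
  simp only [cnorm, map_smul]
  exact norm_smul c (LinearMap.toContinuousLinearMap (Matrix.toEuclideanLin A))

lemma cnorm_zero {m n : ℕ} : cnorm (0 : Matrix (Fin m) (Fin n) ℂ) = 0 := by
  simp [cnorm]

/-- The completely bounded functionals on `W`, as a submodule of the linear dual. -/
def cbDual (W : MatNormed) : Submodule ℂ (W.X →ₗ[ℂ] ℂ) where
  carrier := {f | ∃ C, CBWith W scalarMN f C}
  add_mem' := by
    rintro f g ⟨Cf, hCf, hf⟩ ⟨Cg, hCg, hg⟩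
    refine ⟨Cf + Cg, by positivity, fun k v => ?_⟩
    have : lamp (⇑(f + g)) v = lamp (⇑f) v + lamp (⇑g) v := by
      funext i j; simp [lamp]
    calc scalarMN.N k (lamp (⇑(f + g)) v) = cnorm (lamp (⇑f) v + lamp (⇑g) v) := by rw [this]
    _ ≤ cnorm (lamp (⇑f) v) + cnorm (lamp (⇑g) v) := cnorm_add_le _ _
    _ ≤ Cf * W.N k v + Cg * W.N k v := add_le_add (hf k v) (hg k v)
    _ = (Cf + Cg) * W.N k v := by ring
  zero_mem' := by
    refine ⟨0, le_refl 0, fun k v => ?_⟩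
    have : lamp (⇑(0 : W.X →ₗ[ℂ] ℂ)) v = (0 : Matrix (Fin k) (Fin k) ℂ) := by
      funext i j; simp [lamp]
    rw [this]; simp [cnorm_zero]
  smul_mem' := by
    rintro c f ⟨C, hC, hf⟩
    refine ⟨‖c‖ * C, by positivity, fun k v => ?_⟩
    have : lamp (⇑(c • f)) v = c • lamp (⇑f) v := by
      funext i j; simp [lamp]
    rw [this]
    show cnorm _ ≤ _
    rw [cnorm_smul, mul_assoc]
    exact mul_le_mul_of_nonneg_left (hf k v) (norm_nonneg c)

/-- The operator space dual `W*` (completely bounded functionals with the dual matrix norms). -/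
abbrev dualMN (W : MatNormed) : MatNormed :=
  { X := ↥(cbDual W),
    N := fun _ F => dualN W (fun a b => ((F a b : W.X →ₗ[ℂ] ℂ))) }

/- ## Completely nuclear and completely integral bilinear maps -/

def tidx3 {p q r : ℕ} (s : Fin (p * q * r)) : Fin p × Fin q × Fin r :=
  ⟨(finProdFinEquiv.symm (finProdFinEquiv.symm s).1).1,
   (finProdFinEquiv.symm (finProdFinEquiv.symm s).1).2,
   (finProdFinEquiv.symm s).2⟩

/-- An elementary representation `α (f ⊗ g ⊗ x) β` of a bilinear map, as used to define the
projective norm of `(V* ⊗̂ W*) ⊗̂ Z` and hence the completely nuclear norm. -/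
structure NucRep (V W Z : MatNormed) where
  p : ℕ
  q : ℕ
  r : ℕ
  f : Matrix (Fin p) (Fin p) (V.X →ₗ[ℂ] ℂ)
  g : Matrix (Fin q) (Fin q) (W.X →ₗ[ℂ] ℂ)
  x : Matrix (Fin r) (Fin r) Z.X
  α : Fin (p * q * r) → ℂ
  β : Fin (p * q * r) → ℂ
  hf : ∃ C, 0 ≤ C ∧ ∀ (k : ℕ) (v : Matrix (Fin k) (Fin k) V.X), cnorm (dampl f v) ≤ C * V.N k v
  hg : ∃ C, 0 ≤ C ∧ ∀ (k : ℕ) (w : Matrix (Fin k) (Fin k) W.X), cnorm (dampl g w) ≤ C * W.N k w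

/-- The bilinear map determined by an elementary representation. -/
def nucEval {V W Z : MatNormed} (R : NucRep V W Z) (v : V.X) (w : W.X) : Z.X :=
  ∑ s, ∑ t, (R.α s * R.β t) •
    ((R.f (tidx3 s).1 (tidx3 t).1 v * R.g (tidx3 s).2.1 (tidx3 t).2.1 w) •
      R.x (tidx3 s).2.2 (tidx3 t).2.2)

/-- The value `‖α‖ ‖f‖ ‖g‖ ‖x‖ ‖β‖` of an elementary representation. -/
def nucVal {V W Z : MatNormed} (R : NucRep V W Z) : ℝ :=
  rowNorm R.α * dualN V R.f * dualN W R.g * Z.N R.r R.x * colNorm R.β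

/-- Convergence of a series with respect to the first-level norm of `Z`. -/
def NSum (Z : MatNormed) (f : ℕ → Z.X) (a : Z.X) : Prop :=
  ∀ ε > (0 : ℝ), ∃ M : ℕ, ∀ m ≥ M,
    Z.N 1 (fun _ _ => a - ∑ i ∈ Finset.range m, f i) < ε

/-- `φ` is completely nuclear with nuclear norm at most `C`. -/
def NucBoundedBy (V W Z : MatNormed) (φ : V.X → W.X → Z.X) (C : ℝ) : Prop :=
  0 ≤ C ∧ ∃ R : ℕ → NucRep V W Z,
    (∀ v w, NSum Z (fun m => nucEval (R m) v w) (φ v w)) ∧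
    ∀ M : ℕ, ∑ m ∈ Finset.range M, nucVal (R m) ≤ C

/-- The completely nuclear norm (the quotient norm induced by `Ψ : (V*⊗̂W*)⊗̂Z → JCB(V×W,Z)`). -/
def nucNorm (V W Z : MatNormed) (φ : V.X → W.X → Z.X) : ℝ :=
  sInf {C | NucBoundedBy V W Z φ C}

/-- Completely nuclear bilinear maps. -/
def CompletelyNuclear (V W Z : MatNormed) (φ : V.X → W.X → Z.X) : Prop :=
  IsBilinMap φ ∧ ∃ C, NucBoundedBy V W Z φ C

/-- `φ` is completely integral with integral norm at most `C`: every restriction to a pair of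
finite-dimensional subspaces has completely nuclear norm at most `C`. -/
def IntBoundedBy (V W Z : MatNormed) (φ : V.X → W.X → Z.X) (C : ℝ) : Prop :=
  0 ≤ C ∧ ∀ (F₁ : Submodule ℂ V.X) (F₂ : Submodule ℂ W.X),
    FiniteDimensional ℂ ↥F₁ → FiniteDimensional ℂ ↥F₂ →
    nucNorm (subMN V F₁) (subMN W F₂) Z (fun v w => φ (v : V.X) (w : W.X)) ≤ C

/-- The completely integral norm. -/
def intNorm (V W Z : MatNormed) (φ : V.X → W.X → Z.X) : ℝ :=
  sInf {C | IntBoundedBy V W Z φ C}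

/-- Completely integral bilinear maps. -/
def CompletelyIntegral (V W Z : MatNormed) (φ : V.X → W.X → Z.X) : Prop :=
  IsBilinMap φ ∧ ∃ C, IntBoundedBy V W Z φ C

/- ## Completely nuclear and completely integral linear maps -/

/-- An elementary representation `α (f ⊗ x) β` of a linear map. -/
structure LinNucRep (V Z : MatNormed) where
  p : ℕ
  r : ℕ
  f : Matrix (Fin p) (Fin p) (V.X →ₗ[ℂ] ℂ)
  x : Matrix (Fin r) (Fin r) Z.X
  α : Fin (p * r) → ℂ
  β : Fin (p * r) → ℂ
  hf : ∃ C, 0 ≤ C ∧ ∀ (k : ℕ) (v : Matrix (Fin k) (Fin k) V.X), cnorm (dampl f v) ≤ C * V.N k v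

def linNucEval {V Z : MatNormed} (R : LinNucRep V Z) (v : V.X) : Z.X :=
  ∑ s, ∑ t, (R.α s * R.β t) •
    (R.f (finProdFinEquiv.symm s).1 (finProdFinEquiv.symm t).1 v •
      R.x (finProdFinEquiv.symm s).2 (finProdFinEquiv.symm t).2)

def linNucVal {V Z : MatNormed} (R : LinNucRep V Z) : ℝ :=
  rowNorm R.α * dualN V R.f * Z.N R.r R.x * colNorm R.β

/-- A linear map is completely nuclear with nuclear norm at most `C`. -/
def LinNucBoundedBy (V Z : MatNormed) (φ : V.X → Z.X) (C : ℝ) : Prop :=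
  0 ≤ C ∧ ∃ R : ℕ → LinNucRep V Z,
    (∀ v, NSum Z (fun m => linNucEval (R m) v) (φ v)) ∧
    ∀ M : ℕ, ∑ m ∈ Finset.range M, linNucVal (R m) ≤ C

def linNucNorm (V Z : MatNormed) (φ : V.X → Z.X) : ℝ := sInf {C | LinNucBoundedBy V Z φ C}

def LinCompletelyNuclear (V Z : MatNormed) (φ : V.X → Z.X) : Prop :=
  IsLinearMap ℂ φ ∧ ∃ C, LinNucBoundedBy V Z φ C

def LinIntBoundedBy (V Z : MatNormed) (φ : V.X → Z.X) (C : ℝ) : Prop :=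
  0 ≤ C ∧ ∀ (F : Submodule ℂ V.X), FiniteDimensional ℂ ↥F →
    linNucNorm (subMN V F) Z (fun v => φ (v : V.X)) ≤ C

def linIntNorm (V Z : MatNormed) (φ : V.X → Z.X) : ℝ := sInf {C | LinIntBoundedBy V Z φ C}

def LinCompletelyIntegral (V Z : MatNormed) (φ : V.X → Z.X) : Prop :=
  IsLinearMap ℂ φ ∧ ∃ C, LinIntBoundedBy V Z φ C

/- ## Tensor products -/

/-- The functional `f ⊗ g` on `V ⊗ W`. -/
def pairLF {V W : Type} [AddCommGroup V] [Module ℂ V] [AddCommGroup W] [Module ℂ W]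
    (f : V →ₗ[ℂ] ℂ) (g : W →ₗ[ℂ] ℂ) : (V ⊗[ℂ] W) →ₗ[ℂ] ℂ :=
  TensorProduct.lift ((LinearMap.mul ℂ ℂ).compl₁₂ f g)

/-- The matrix tensor product `M_p(A) × M_q(B) → M_{pq}(A ⊗ B)`. -/
def matTen {A B : Type} [AddCommGroup A] [Module ℂ A] [AddCommGroup B] [Module ℂ B]
    {p q : ℕ} (v : Matrix (Fin p) (Fin p) A) (w : Matrix (Fin q) (Fin q) B) :
    Matrix (Fin (p * q)) (Fin (p * q)) (A ⊗[ℂ] B) := fun s t =>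
  v (finProdFinEquiv.symm s).1 (finProdFinEquiv.symm t).1 ⊗ₜ[ℂ]
    w (finProdFinEquiv.symm s).2 (finProdFinEquiv.symm t).2

/-- The injective operator space tensor norm on `M_n(V ⊗ W)`. -/
def injN (V W : MatNormed) (n : ℕ) (u : Matrix (Fin n) (Fin n) (V.X ⊗[ℂ] W.X)) : ℝ :=
  sSup {c | ∃ (p q : ℕ) (f : Matrix (Fin p) (Fin p) (V.X →ₗ[ℂ] ℂ))
      (g : Matrix (Fin q) (Fin q) (W.X →ₗ[ℂ] ℂ)),
      (∀ (k : ℕ) (v : Matrix (Fin k) (Fin k) V.X), cnorm (dampl f v) ≤ V.N k v) ∧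
      (∀ (k : ℕ) (w : Matrix (Fin k) (Fin k) W.X), cnorm (dampl g w) ≤ W.N k w) ∧
      c = cnorm (flat (fun i j => Matrix.of fun s t =>
        pairLF (f (finProdFinEquiv.symm s).1 (finProdFinEquiv.symm t).1)
          (g (finProdFinEquiv.symm s).2 (finProdFinEquiv.symm t).2) (u i j)))}

/-- `T` (an operator space) realizes the injective operator space tensor product `V ⊗̌ W`
via the bilinear map `ι`. -/
def IsInjTensor (V W T : OpSpace) (ι : V.X →ₗ[ℂ] W.X →ₗ[ℂ] T.X) : Prop :=
  Function.Bijective (TensorProduct.lift ι) ∧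
  ∀ (n : ℕ) (u : Matrix (Fin n) (Fin n) (V.X ⊗[ℂ] W.X)),
    T.N n (lamp (TensorProduct.lift ι) u) = injN V.m W.m n u

/-- The projective operator space tensor norm on `M_n(A ⊗ B)`. -/
def projN (A B : MatNormed) (n : ℕ) (u : Matrix (Fin n) (Fin n) (A.X ⊗[ℂ] B.X)) : ℝ :=
  sInf {c | ∃ (p q : ℕ) (v : Matrix (Fin p) (Fin p) A.X) (w : Matrix (Fin q) (Fin q) B.X)
      (α : Matrix (Fin n) (Fin (p * q)) ℂ) (β : Matrix (Fin (p * q)) (Fin n) ℂ),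
      (u = fun i j => ∑ s, ∑ t, (α i s * β t j) • matTen v w s t) ∧
      c = cnorm α * A.N p v * B.N q w * cnorm β}

/-- Padding a rectangular matrix to a square one. -/
def padSquare {X : Type} [Zero X] {n r : ℕ} (v : Matrix (Fin n) (Fin r) X) :
    Matrix (Fin (n + r)) (Fin (n + r)) X := fun i j =>
  if h : (i : ℕ) < n then (if h' : (j : ℕ) < r then v ⟨i, h⟩ ⟨j, h'⟩ else 0) else 0

/-- The norm of a rectangular matrix over a matrix-normed space. -/
def rectN (A : MatNormed) {n r : ℕ} (v : Matrix (Fin n) (Fin r) A.X) : ℝ :=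
  A.N (n + r) (padSquare v)

/-- The Haagerup operator space tensor norm on `M_n(A ⊗ B)`. -/
def haagN (A B : MatNormed) (n : ℕ) (u : Matrix (Fin n) (Fin n) (A.X ⊗[ℂ] B.X)) : ℝ :=
  sInf {c | ∃ (r : ℕ) (v : Matrix (Fin n) (Fin r) A.X) (w : Matrix (Fin r) (Fin n) B.X),
    (u = fun i j => ∑ k, v i k ⊗ₜ[ℂ] w k j) ∧ c = rectN A v * rectN B w}

/-- The transpose flip `M_n(V ⊗ W) → M_n(W ⊗ V)`. -/
def tflip {V W : Type} [AddCommGroup V] [Module ℂ V] [AddCommGroup W] [Module ℂ W]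
    {n : ℕ} (u : Matrix (Fin n) (Fin n) (V ⊗[ℂ] W)) :
    Matrix (Fin n) (Fin n) (W ⊗[ℂ] V) := fun i j => TensorProduct.comm ℂ V W (u j i)

/-- The intersection `(V ⊗_h W) ∩ (W ⊗_h V)` with its natural matrix norms. -/
abbrev interMN (V W : MatNormed) : MatNormed :=
  { X := V.X ⊗[ℂ] W.X,
    N := fun n u => max (haagN V W n u) (haagN W V n (tflip u)) }

/- ## Symmetrized multiplicatively bounded maps -/

/-- `φ` decomposes as `φ₁ + φ₂` with `φ₁` multiplicatively bounded and the transpose of `φ₂`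
multiplicatively bounded, with total constant at most `C`. -/
def SMBWith (V W Z : MatNormed) (φ : V.X → W.X → Z.X) (C : ℝ) : Prop :=
  ∃ (φ₁ φ₂ : V.X → W.X → Z.X) (C₁ C₂ : ℝ),
    (∀ v w, φ v w = φ₁ v w + φ₂ v w) ∧ IsBilinMap φ₁ ∧ IsBilinMap φ₂ ∧
    MBWith V W Z φ₁ C₁ ∧ MBWith W V Z (fun w v => φ₂ v w) C₂ ∧ C₁ + C₂ ≤ C

/-- The symmetrized multiplicatively bounded norm. -/
def smbNorm (V W Z : MatNormed) (φ : V.X → W.X → Z.X) : ℝ := sInf {C | SMBWith V W Z φ C}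

/- ## Extendibility -/

/-- `φ` admits, for the fixed super-spaces `A ⊇ V`, `B ⊇ W` (via `jV`, `jW`), a jointly
completely bounded bilinear extension with constant at most `C`. -/
def ExtWith (V W Z A B : MatNormed) (jV : V.X → A.X) (jW : W.X → B.X)
    (φ : V.X → W.X → Z.X) (C : ℝ) : Prop :=
  ∃ ψ : A.X → B.X → Z.X, IsBilinMap ψ ∧ JCBWith A B Z ψ C ∧ ∀ v w, ψ (jV v) (jW w) = φ v w

/-- The extendible norm relative to the fixed embeddings `jV`, `jW`. -/
def extNormVia (V W Z A B : MatNormed) (jV : V.X → A.X) (jW : W.X → B.X)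
    (φ : V.X → W.X → Z.X) : ℝ := sInf {C | ExtWith V W Z A B jV jW φ C}

/-- `φ` is completely extendible: it admits jointly completely bounded bilinear extensions
to arbitrary operator space super-spaces. -/
def CompletelyExtendible (V W Z : MatNormed) (φ : V.X → W.X → Z.X) : Prop :=
  ∀ (A B : OpSpace) (jV : V.X → A.X) (jW : W.X → B.X),
    CompleteIsometry V A.m jV → CompleteIsometry W B.m jW →
    ∃ ψ : A.X → B.X → Z.X, IsBilinMap ψ ∧ (∃ C, JCBWith A.m B.m Z ψ C) ∧
      ∀ v w, ψ (jV v) (jW w) = φ v w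

/-- `L(H)`, the bounded operators on a Hilbert space `H`, with its canonical matrix norms
(`M_n(L(H))` acting on `H^n` with its ℓ²-norm). -/
abbrev LH (H : Type) [NormedAddCommGroup H] [InnerProductSpace ℂ H] : MatNormed :=
  { X := H →L[ℂ] H,
    N := fun n A => sInf {C | 0 ≤ C ∧ ∀ x : Fin n → H,
      Real.sqrt (∑ i, ‖∑ j, (A i j) (x j)‖ ^ 2) ≤ C * Real.sqrt (∑ j, ‖x j‖ ^ 2)} }

/- ## Operator space tensor norms -/

/-- An operator space tensor norm: an assignment of matrix norms to every algebraic tensor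
product of operator spaces, satisfying Ruan's axioms, the cross-norm property and the
completely metric mapping property. -/
structure OSTensorNorm where
  tn : ∀ (V W : OpSpace) (n : ℕ), Matrix (Fin n) (Fin n) (V.X ⊗[ℂ] W.X) → ℝ
  ruan : ∀ V W : OpSpace, RuanAxioms { X := V.X ⊗[ℂ] W.X, N := tn V W }
  cross : ∀ (V W : OpSpace) (p q : ℕ) (v : Matrix (Fin p) (Fin p) V.X)
      (w : Matrix (Fin q) (Fin q) W.X), tn V W (p * q) (matTen v w) = V.N p v * W.N q w
  mapping : ∀ (U₁ V U₂ W : OpSpace) (r₁ : U₁.X →ₗ[ℂ] V.X) (r₂ : U₂.X →ₗ[ℂ] W.X) (C₁ C₂ : ℝ),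
    CBWith U₁.m V.m (⇑r₁) C₁ → CBWith U₂.m W.m (⇑r₂) C₂ →
    CBWith { X := U₁.X ⊗[ℂ] U₂.X, N := tn U₁ U₂ } { X := V.X ⊗[ℂ] W.X, N := tn V W }
      (⇑(TensorProduct.map r₁ r₂)) (C₁ * C₂)

/-- The matrix-normed space `V ⊗_α W` determined by an operator space tensor norm. -/
abbrev OSTensorNorm.mn (t : OSTensorNorm) (V W : OpSpace) : MatNormed :=
  { X := V.X ⊗[ℂ] W.X, N := t.tn V W }


/- ## Auxiliary lemmas -/
section Aux
open scoped ComplexConjugate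

lemma cnorm_nonneg {m n : ℕ} (A : Matrix (Fin m) (Fin n) ℂ) : 0 ≤ cnorm A := norm_nonneg _

lemma toEuclideanLin_apply' {m n : ℕ} (A : Matrix (Fin m) (Fin n) ℂ)
    (y : EuclideanSpace ℂ (Fin n)) (i : Fin m) :
    Matrix.toEuclideanLin A y i = ∑ j, A i j * y j := by
  rw [Matrix.toEuclideanLin_apply]
  simp [Matrix.mulVec, dotProduct]

lemma euclid_inner {k : ℕ} (x y : EuclideanSpace ℂ (Fin k)) :
    (inner ℂ x y : ℂ) = ∑ i, conj (x i) * y i := by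
  simp [PiLp.inner_apply, RCLike.inner_apply, mul_comm]

lemma euclid_norm {k : ℕ} (x : EuclideanSpace ℂ (Fin k)) :
    ‖x‖ = Real.sqrt (∑ i, ‖x i‖ ^ 2) := by
  exact EuclideanSpace.norm_eq x

lemma euclid_coord_le {k : ℕ} (x : EuclideanSpace ℂ (Fin k)) (i : Fin k) : ‖x i‖ ≤ ‖x‖ := by
  rw [euclid_norm]
  have h1 : ‖x i‖ ^ 2 ≤ ∑ j, ‖x j‖ ^ 2 :=
    Finset.single_le_sum (f := fun j => ‖x j‖ ^ 2) (fun j _ => sq_nonneg _) (Finset.mem_univ i)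
  calc ‖x i‖ = Real.sqrt (‖x i‖ ^ 2) := by rw [Real.sqrt_sq (norm_nonneg _)]
  _ ≤ _ := Real.sqrt_le_sqrt h1

lemma cnorm_le_bound {m n : ℕ} (A : Matrix (Fin m) (Fin n) ℂ) (C : ℝ) (hC : 0 ≤ C)
    (h : ∀ y : EuclideanSpace ℂ (Fin n), ‖Matrix.toEuclideanLin A y‖ ≤ C * ‖y‖) :
    cnorm A ≤ C :=
  ContinuousLinearMap.opNorm_le_bound _ hC h

lemma cnorm_le_of_inner {m n : ℕ} (A : Matrix (Fin m) (Fin n) ℂ) (C : ℝ) (hC : 0 ≤ C)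
    (h : ∀ (x : EuclideanSpace ℂ (Fin m)) (y : EuclideanSpace ℂ (Fin n)),
      ‖∑ p, ∑ q, conj (x p) * (A p q * y q)‖ ≤ C * ‖x‖ * ‖y‖) : cnorm A ≤ C := by
  apply cnorm_le_bound A C hC
  intro y
  set z : EuclideanSpace ℂ (Fin m) := Matrix.toEuclideanLin A y with hz
  have hin : (inner ℂ z z : ℂ) = ∑ p, ∑ q, conj (z p) * (A p q * y q) := by
    rw [euclid_inner]
    refine Finset.sum_congr rfl (fun p _ => ?_)
    rw [show z p = ∑ q, A p q * y q from toEuclideanLin_apply' A y p, Finset.mul_sum]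
  have h2 : ‖z‖ ^ 2 ≤ C * ‖z‖ * ‖y‖ := by
    have hh := h z y
    rw [← hin, inner_self_eq_norm_sq_to_K (𝕜 := ℂ) z] at hh
    simpa using hh
  rcases eq_or_lt_of_le (norm_nonneg z) with h0 | h0
  · rw [← h0]; positivity
  · have := h2
    rw [sq] at this
    calc ‖z‖ = ‖z‖ * ‖z‖ / ‖z‖ := by field_simp
    _ ≤ C * ‖z‖ * ‖y‖ / ‖z‖ := by gcongr
    _ = C * ‖y‖ := by field_simp

lemma cnorm_row_le {k : ℕ} (α : Fin k → ℂ) :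
    cnorm (Matrix.of fun (_ : Fin 1) s => α s) ≤ Real.sqrt (∑ s, ‖α s‖ ^ 2) := by
  apply cnorm_le_of_inner _ _ (Real.sqrt_nonneg _)
  intro x y
  have : ∑ p : Fin 1, ∑ q, conj (x p) * ((Matrix.of fun (_ : Fin 1) s => α s) p q * y q)
      = conj (x 0) * ∑ q, α q * y q := by
    rw [Fin.sum_univ_one, Finset.mul_sum]
    rfl
  rw [this]
  set a : EuclideanSpace ℂ (Fin k) := WithLp.toLp 2 (fun q => conj (α q)) with ha
  have hsum : ∑ q, α q * y q = inner ℂ a y := by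
    rw [euclid_inner]
    exact Finset.sum_congr rfl (fun q _ => by simp [ha])
  rw [norm_mul, hsum]
  have h1 : ‖(inner ℂ a y : ℂ)‖ ≤ ‖a‖ * ‖y‖ := norm_inner_le_norm a y
  have h2 : ‖a‖ = Real.sqrt (∑ s, ‖α s‖ ^ 2) := by
    rw [euclid_norm]
    congr 1
    exact Finset.sum_congr rfl (fun q _ => by simp [ha])
  have h3 : ‖(starRingEnd ℂ) (x 0)‖ ≤ ‖x‖ := by
    rw [RCLike.norm_conj]; exact euclid_coord_le x 0
  calc ‖(starRingEnd ℂ) (x 0)‖ * ‖(inner ℂ a y : ℂ)‖ ≤ ‖x‖ * (‖a‖ * ‖y‖) := by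
        apply mul_le_mul h3 h1 (norm_nonneg _) (norm_nonneg _)
  _ = Real.sqrt (∑ s, ‖α s‖ ^ 2) * ‖x‖ * ‖y‖ := by rw [h2]; ring

lemma cnorm_col_le {k : ℕ} (β : Fin k → ℂ) :
    cnorm (Matrix.of fun s (_ : Fin 1) => β s) ≤ Real.sqrt (∑ s, ‖β s‖ ^ 2) := by
  apply cnorm_le_of_inner _ _ (Real.sqrt_nonneg _)
  intro x y
  have : ∑ p, ∑ q : Fin 1, conj (x p) * ((Matrix.of fun s (_ : Fin 1) => β s) p q * y q)
      = (∑ p, conj (x p) * β p) * y 0 := by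
    rw [Finset.sum_mul]
    exact Finset.sum_congr rfl (fun p _ => by
      rw [Fin.sum_univ_one]; simp only [Matrix.of_apply]; ring)
  rw [this]
  set b : EuclideanSpace ℂ (Fin k) := WithLp.toLp 2 (fun q => β q) with hb
  have hsum : ∑ p, conj (x p) * β p = inner ℂ x b := by
    rw [euclid_inner]
  rw [norm_mul, hsum]
  have h1 : ‖(inner ℂ x b : ℂ)‖ ≤ ‖x‖ * ‖b‖ := norm_inner_le_norm x b
  have h2 : ‖b‖ = Real.sqrt (∑ s, ‖β s‖ ^ 2) := by rw [euclid_norm]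
  have h3 : ‖y 0‖ ≤ ‖y‖ := euclid_coord_le y 0
  calc ‖(inner ℂ x b : ℂ)‖ * ‖y 0‖ ≤ (‖x‖ * ‖b‖) * ‖y‖ :=
        mul_le_mul h1 h3 (norm_nonneg _) (by positivity)
  _ = Real.sqrt (∑ s, ‖β s‖ ^ 2) * ‖x‖ * ‖y‖ := by rw [h2]; ring

lemma cnorm_le_sum_abs {m n : ℕ} (A : Matrix (Fin m) (Fin n) ℂ) :
    cnorm A ≤ ∑ p, ∑ q, ‖A p q‖ := by
  apply cnorm_le_of_inner _ _ (by positivity)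
  intro x y
  calc ‖∑ p, ∑ q, conj (x p) * (A p q * y q)‖
      ≤ ∑ p, ‖∑ q, conj (x p) * (A p q * y q)‖ := norm_sum_le _ _
  _ ≤ ∑ p, ∑ q, ‖conj (x p) * (A p q * y q)‖ :=
      Finset.sum_le_sum (fun p _ => norm_sum_le _ _)
  _ ≤ ∑ p, ∑ q, ‖A p q‖ * ‖x‖ * ‖y‖ := by
      apply Finset.sum_le_sum; intro p _; apply Finset.sum_le_sum; intro q _
      rw [norm_mul, norm_mul, RCLike.norm_conj]
      calc ‖x p‖ * (‖A p q‖ * ‖y q‖) ≤ ‖x‖ * (‖A p q‖ * ‖y‖) := by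
            apply mul_le_mul (euclid_coord_le x p) ?_ (by positivity) (norm_nonneg _)
            exact mul_le_mul_of_nonneg_left (euclid_coord_le y q) (norm_nonneg _)
      _ = ‖A p q‖ * ‖x‖ * ‖y‖ := by ring
  _ = (∑ p, ∑ q, ‖A p q‖) * ‖x‖ * ‖y‖ := by rw [Finset.sum_mul, Finset.sum_mul]; simp [Finset.sum_mul]

end Aux
section Aux2
open scoped ComplexConjugate

/-- A 1×1 matrix with a single entry. -/
def one₁ {T : Type} (t : T) : Matrix (Fin 1) (Fin 1) T := fun _ _ => t

variable (V : OpSpace)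

lemma opN_nonneg (k : ℕ) (v : Matrix (Fin k) (Fin k) V.X) : 0 ≤ V.N k v := V.ruan.1 k v

lemma opN_add (k : ℕ) (v w : Matrix (Fin k) (Fin k) V.X) :
    V.N k (v + w) ≤ V.N k v + V.N k w := V.ruan.2.1 k v w

lemma opN_smul (k : ℕ) (c : ℂ) (v : Matrix (Fin k) (Fin k) V.X) :
    V.N k (c • v) = ‖c‖ * V.N k v := V.ruan.2.2.1 k c v

lemma opN_zero (k : ℕ) : V.N k (0 : Matrix (Fin k) (Fin k) V.X) = 0 := by
  have := opN_smul V k 0 0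
  rwa [zero_smul, norm_zero, zero_mul] at this

/-- Level-1 bound for a linear functional on a finite-dimensional subspace. -/
lemma exists_level1_bound (F : Submodule ℂ V.X) (hFD : FiniteDimensional ℂ ↥F)
    (f : ↥F →ₗ[ℂ] ℂ) :
    ∃ c, 0 ≤ c ∧ ∀ x : ↥F, ‖f x‖ ≤ c * V.N 1 (fun _ _ => (x : V.X)) := by
  letI : NormedAddCommGroup ↥F := AddGroupNorm.toNormedAddCommGroup
    { toFun := fun x => V.N 1 (fun _ _ => (x : V.X))
      map_zero' := by
        show V.N 1 (fun _ _ => ((0 : ↥F) : V.X)) = 0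
        have h : (fun (_ _ : Fin 1) => ((0 : ↥F) : V.X)) = (0 : Matrix (Fin 1) (Fin 1) V.X) := by
          funext i j; simp
        rw [h, opN_zero]
      add_le' := by
        intro x y
        show V.N 1 (fun _ _ => ((x + y : ↥F) : V.X)) ≤ _ + _
        have h : (fun (_ _ : Fin 1) => ((x + y : ↥F) : V.X))
            = (fun (_ _ : Fin 1) => (x : V.X)) + (fun (_ _ : Fin 1) => (y : V.X)) := by
          funext i j; rfl
        rw [h]; exact opN_add V 1 _ _
      neg' := by
        intro x
        show V.N 1 (fun _ _ => ((-x : ↥F) : V.X)) = V.N 1 (fun _ _ => (x : V.X))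
        have h : (fun (_ _ : Fin 1) => ((-x : ↥F) : V.X))
            = (-1 : ℂ) • (fun (_ _ : Fin 1) => (x : V.X)) := by
          funext i j
          show ((-x : ↥F) : V.X) = (-1 : ℂ) • (x : V.X)
          push_cast
          module
        rw [h]; exact (opN_smul V 1 (-1 : ℂ) _).trans (by rw [norm_neg, norm_one, one_mul])
      eq_zero_of_map_eq_zero' := by
        intro x hx
        have h0 := V.ruan.2.2.2.1 1 _ hx
        have h1 : (x : V.X) = 0 := congrFun (congrFun h0 0) 0
        exact Subtype.ext h1 }
  letI : NormedSpace ℂ ↥F := by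
    refine ⟨fun c x => ?_⟩
    show V.N 1 (fun _ _ => ((c • x : ↥F) : V.X)) ≤ ‖c‖ * V.N 1 (fun _ _ => (x : V.X))
    have h2 : (fun (_ _ : Fin 1) => ((c • x : ↥F) : V.X))
        = c • (fun (_ _ : Fin 1) => (x : V.X)) := by funext i j; rfl
    rw [h2]; exact (opN_smul V 1 c _).le
  haveI := hFD
  let f' : ↥F →L[ℂ] ℂ := LinearMap.toContinuousLinearMap f
  exact ⟨‖f'‖, norm_nonneg _, fun x => f'.le_opNorm x⟩

/-- The amplification bound: a level-1-bounded functional is completely bounded. -/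
lemma funct_cb_bound (F : Submodule ℂ V.X) (f0 : ↥F →ₗ[ℂ] ℂ) (c : ℝ) (hc0 : 0 ≤ c)
    (hc : ∀ x : ↥F, ‖f0 x‖ ≤ c * V.N 1 (fun _ _ => (x : V.X))) (k : ℕ)
    (v : Matrix (Fin k) (Fin k) ↥F) :
    cnorm (dampl (one₁ f0) v) ≤ c * V.N k (fun i j => ((v i j : V.X))) := by
  set S : Matrix (Fin k) (Fin k) V.X := fun i j => ((v i j : V.X)) with hS
  apply cnorm_le_of_inner _ _ (mul_nonneg hc0 (opN_nonneg V k S))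
  intro x y
  set A := dampl (one₁ f0) v with hA
  have hAe : ∀ p q, A p q = f0 (v (finProdFinEquiv.symm p).1 (finProdFinEquiv.symm q).1) :=
    fun p q => rfl
  have hsum1 : ∀ (T : Type) (_ : AddCommMonoid T) (g : Fin (k * 1) → T),
      ∑ p, g p = ∑ a : Fin k, g (finProdFinEquiv (a, 0)) := by
    intro T _ g
    rw [← Equiv.sum_comp finProdFinEquiv g, Fintype.sum_prod_type]
    exact Finset.sum_congr rfl (fun a _ => by rw [Fin.sum_univ_one])
  have key : ∑ p, ∑ q, conj (x p) * (A p q * y q)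
      = f0 (∑ p, ∑ q, (conj (x p) * y q) • v (finProdFinEquiv.symm p).1
          (finProdFinEquiv.symm q).1) := by
    rw [map_sum]
    refine Finset.sum_congr rfl (fun p _ => ?_)
    rw [map_sum]
    refine Finset.sum_congr rfl (fun q _ => ?_)
    rw [map_smul, hAe, smul_eq_mul]
    ring
  rw [key]
  set u : ↥F := ∑ p, ∑ q, (conj (x p) * y q) • v (finProdFinEquiv.symm p).1
      (finProdFinEquiv.symm q).1 with hu
  have hmain : V.N 1 (fun _ _ => (u : V.X)) ≤ V.N k S * ‖x‖ * ‖y‖ := by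
    set α : Matrix (Fin 1) (Fin k) ℂ := Matrix.of fun _ a => conj (x (finProdFinEquiv (a, 0)))
      with hα
    set β : Matrix (Fin k) (Fin 1) ℂ := Matrix.of fun b _ => y (finProdFinEquiv (b, 0)) with hβ
    have hmat : (fun (_ _ : Fin 1) => (u : V.X))
        = fun (i j : Fin 1) => ∑ a, ∑ b, (α i a * β b j) • S a b := by
      funext i j
      show ((u : V.X)) = _
      rw [hu]
      rw [Submodule.coe_sum]
      rw [hsum1 _ _ _]
      refine Finset.sum_congr rfl (fun a _ => ?_)
      rw [Submodule.coe_sum, hsum1 _ _ _]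
      refine Finset.sum_congr rfl (fun b _ => ?_)
      simp only [SetLike.val_smul, hα, hβ, hS, Matrix.of_apply, Equiv.symm_apply_apply]
    rw [hmat]
    refine le_trans (V.ruan.2.2.2.2.2 k 1 α S β) ?_
    have hx1 : cnorm α ≤ ‖x‖ := by
      refine le_trans (cnorm_row_le _) ?_
      rw [euclid_norm]
      apply Real.sqrt_le_sqrt
      rw [hsum1 ℝ _ (fun p => ‖x p‖ ^ 2)]
      exact le_of_eq (Finset.sum_congr rfl (fun a _ => by rw [RCLike.norm_conj]))
    have hy1 : cnorm β ≤ ‖y‖ := by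
      refine le_trans (cnorm_col_le _) ?_
      rw [euclid_norm]
      apply Real.sqrt_le_sqrt
      rw [hsum1 ℝ _ (fun p => ‖y p‖ ^ 2)]
    calc cnorm α * V.N k S * cnorm β ≤ ‖x‖ * V.N k S * ‖y‖ := by
          apply mul_le_mul _ hy1 (cnorm_nonneg _) (mul_nonneg (norm_nonneg _) (opN_nonneg V k S))
          exact mul_le_mul_of_nonneg_right hx1 (opN_nonneg V k S)
    _ = V.N k S * ‖x‖ * ‖y‖ := by ring
  calc ‖f0 u‖ ≤ c * V.N 1 (fun _ _ => (u : V.X)) := hc u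
  _ ≤ c * (V.N k S * ‖x‖ * ‖y‖) := mul_le_mul_of_nonneg_left hmain hc0
  _ = c * V.N k S * ‖x‖ * ‖y‖ := by ring

end Aux2
section Aux3

lemma dualN_nonneg (V : MatNormed) {p : ℕ} (f : Matrix (Fin p) (Fin p) (V.X →ₗ[ℂ] ℂ)) :
    0 ≤ dualN V f := Real.sInf_nonneg (fun _ hD => hD.1)

lemma dualN_le (V : MatNormed) {p : ℕ} (f : Matrix (Fin p) (Fin p) (V.X →ₗ[ℂ] ℂ)) {c : ℝ}
    (h : 0 ≤ c ∧ ∀ (k : ℕ) (v : Matrix (Fin k) (Fin k) V.X), cnorm (dampl f v) ≤ c * V.N k v) :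
    dualN V f ≤ c := csInf_le ⟨0, fun _ hD => hD.1⟩ h

lemma rowNorm_nonneg {k : ℕ} (α : Fin k → ℂ) : 0 ≤ rowNorm α := cnorm_nonneg _
lemma colNorm_nonneg {k : ℕ} (β : Fin k → ℂ) : 0 ≤ colNorm β := cnorm_nonneg _

lemma rowNorm_one_le : rowNorm (fun _ : Fin (1*1*1) => (1:ℂ)) ≤ 1 := by
  refine le_trans (cnorm_row_le _) ?_
  simp

lemma colNorm_one_le : colNorm (fun _ : Fin (1*1*1) => (1:ℂ)) ≤ 1 := by
  refine le_trans (cnorm_col_le _) ?_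
  simp

/-- A rank-one elementary nuclear representation. -/
def rankOneRep (V W Z : MatNormed) (f : V.X →ₗ[ℂ] ℂ) (g : W.X →ₗ[ℂ] ℂ) (z : Z.X)
    (hf : ∃ C, 0 ≤ C ∧ ∀ (k : ℕ) (v : Matrix (Fin k) (Fin k) V.X),
      cnorm (dampl (one₁ f) v) ≤ C * V.N k v)
    (hg : ∃ C, 0 ≤ C ∧ ∀ (k : ℕ) (w : Matrix (Fin k) (Fin k) W.X),
      cnorm (dampl (one₁ g) w) ≤ C * W.N k w) : NucRep V W Z where
  p := 1
  q := 1
  r := 1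
  f := one₁ f
  g := one₁ g
  x := one₁ z
  α := fun _ => 1
  β := fun _ => 1
  hf := hf
  hg := hg

lemma rankOneRep_eval (V W Z : MatNormed) (f : V.X →ₗ[ℂ] ℂ) (g : W.X →ₗ[ℂ] ℂ) (z : Z.X)
    (hf hg) (v : V.X) (w : W.X) :
    nucEval (rankOneRep V W Z f g z hf hg) v w = (f v * g w) • z := by
  unfold nucEval rankOneRep
  dsimp only
  rw [Fin.sum_univ_one, Fin.sum_univ_one]
  simp [one₁, tidx3]

lemma rankOneRep_val_le (V W Z : MatNormed) (f : V.X →ₗ[ℂ] ℂ) (g : W.X →ₗ[ℂ] ℂ) (z : Z.X)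
    (hf hg) (Cf Cg : ℝ)
    (hCf : dualN V (one₁ f) ≤ Cf) (hCg : dualN W (one₁ g) ≤ Cg)
    (hZ : 0 ≤ Z.N 1 (one₁ z)) :
    nucVal (rankOneRep V W Z f g z hf hg) ≤ Cf * Cg * Z.N 1 (one₁ z) := by
  have hCf0 : 0 ≤ Cf := le_trans (dualN_nonneg _ _) hCf
  have hCg0 : 0 ≤ Cg := le_trans (dualN_nonneg _ _) hCg
  unfold nucVal rankOneRep
  dsimp only
  have t1 : rowNorm (fun _ : Fin (1*1*1) => (1:ℂ)) * dualN V (one₁ f) ≤ 1 * Cf :=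
    mul_le_mul rowNorm_one_le hCf (dualN_nonneg _ _) zero_le_one
  have t2 : rowNorm (fun _ : Fin (1*1*1) => (1:ℂ)) * dualN V (one₁ f) * dualN W (one₁ g)
      ≤ 1 * Cf * Cg := mul_le_mul t1 hCg (dualN_nonneg _ _) (by positivity)
  have t3 : rowNorm (fun _ : Fin (1*1*1) => (1:ℂ)) * dualN V (one₁ f) * dualN W (one₁ g)
      * Z.N 1 (one₁ z) ≤ 1 * Cf * Cg * Z.N 1 (one₁ z) :=
    mul_le_mul_of_nonneg_right t2 hZ
  have t4 : rowNorm (fun _ : Fin (1*1*1) => (1:ℂ)) * dualN V (one₁ f) * dualN W (one₁ g)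
      * Z.N 1 (one₁ z) * colNorm (fun _ : Fin (1*1*1) => (1:ℂ))
      ≤ 1 * Cf * Cg * Z.N 1 (one₁ z) * 1 := by
    apply mul_le_mul t3 colNorm_one_le (colNorm_nonneg _)
    positivity
  calc rowNorm (fun _ : Fin (1*1*1) => (1:ℂ)) * dualN V (one₁ f) * dualN W (one₁ g)
      * Z.N 1 (one₁ z) * colNorm (fun _ : Fin (1*1*1) => (1:ℂ))
      ≤ 1 * Cf * Cg * Z.N 1 (one₁ z) * 1 := t4
  _ = Cf * Cg * Z.N 1 (one₁ z) := by ring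

/-- Restriction of a nuclear representation to subspaces. -/
def restrictRep (V W Z : MatNormed) (F₁ : Submodule ℂ V.X) (F₂ : Submodule ℂ W.X)
    (R : NucRep V W Z) : NucRep (subMN V F₁) (subMN W F₂) Z where
  p := R.p
  q := R.q
  r := R.r
  f := fun a b => (R.f a b).comp (F₁.subtype)
  g := fun a b => (R.g a b).comp (F₂.subtype)
  x := R.x
  α := R.α
  β := R.β
  hf := by
    obtain ⟨C, hC0, hC⟩ := R.hf
    exact ⟨C, hC0, fun k v => hC k (fun i j => ((v i j : V.X)))⟩
  hg := by
    obtain ⟨C, hC0, hC⟩ := R.hg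
    exact ⟨C, hC0, fun k w => hC k (fun i j => ((w i j : W.X)))⟩

lemma restrictRep_eval (V W Z : MatNormed) (F₁ : Submodule ℂ V.X) (F₂ : Submodule ℂ W.X)
    (R : NucRep V W Z) (v : ↥F₁) (w : ↥F₂) :
    nucEval (restrictRep V W Z F₁ F₂ R) v w = nucEval R (v : V.X) (w : W.X) := rfl

lemma restrictRep_val (V W Z : MatNormed) (F₁ : Submodule ℂ V.X) (F₂ : Submodule ℂ W.X)
    (R : NucRep V W Z) (hZ : 0 ≤ Z.N R.r R.x) :
    nucVal (restrictRep V W Z F₁ F₂ R) ≤ nucVal R := by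
  have hd1 : dualN (subMN V F₁) (fun a b => (R.f a b).comp (F₁.subtype)) ≤ dualN V R.f := by
    apply csInf_le_csInf ⟨0, fun _ hD => hD.1⟩
    · obtain ⟨C, hC0, hC⟩ := R.hf
      exact ⟨C, hC0, hC⟩
    · rintro D ⟨hD0, hD⟩
      exact ⟨hD0, fun k v => hD k (fun i j => ((v i j : V.X)))⟩
  have hd2 : dualN (subMN W F₂) (fun a b => (R.g a b).comp (F₂.subtype)) ≤ dualN W R.g := by
    apply csInf_le_csInf ⟨0, fun _ hD => hD.1⟩
    · obtain ⟨C, hC0, hC⟩ := R.hg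
      exact ⟨C, hC0, hC⟩
    · rintro D ⟨hD0, hD⟩
      exact ⟨hD0, fun k w => hD k (fun i j => ((w i j : W.X)))⟩
  unfold nucVal restrictRep
  dsimp only
  have t1 : rowNorm R.α * dualN (subMN V F₁) (fun a b => (R.f a b).comp (F₁.subtype))
      ≤ rowNorm R.α * dualN V R.f := mul_le_mul_of_nonneg_left hd1 (rowNorm_nonneg _)
  have t2 := mul_le_mul t1 hd2 (dualN_nonneg _ _)
    (mul_nonneg (rowNorm_nonneg _) (dualN_nonneg _ _))
  have t3 := mul_le_mul_of_nonneg_right t2 hZ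
  exact mul_le_mul_of_nonneg_right t3 (colNorm_nonneg _)

lemma sum_range_two_mul {M : Type*} [AddCommMonoid M] (f : ℕ → M) (u : ℕ) :
    ∑ t ∈ Finset.range (2*u), f t = ∑ s ∈ Finset.range u, (f (2*s) + f (2*s+1)) := by
  induction u with
  | zero => simp
  | succ u ih =>
    rw [Nat.mul_succ, Finset.sum_range_succ, Finset.sum_range_succ, Finset.sum_range_succ, ← ih,
      add_assoc]

lemma sum_range_mul_block {M : Type*} [AddCommMonoid M] (g : ℕ → M) (L N : ℕ) :
    ∑ s ∈ Finset.range (L*N), g s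
      = ∑ k ∈ Finset.range N, ∑ j ∈ Finset.range L, g (L*k + j) := by
  induction N with
  | zero => simp
  | succ N ih =>
    rw [Nat.mul_succ, Finset.sum_range_add, ih, Finset.sum_range_succ]

end Aux3
section Aux4

variable (m n : ℕ)

/-- The first-level norm on `M_n(M_m)`. -/
def zn1 (d : Matrix (Fin n) (Fin n) (Matrix (Fin m) (Fin m) ℂ)) : ℝ :=
  ((scalarMN.matLevel m).matLevel n).N 1 (one₁ d)

lemma zn1_eq (d : Matrix (Fin n) (Fin n) (Matrix (Fin m) (Fin m) ℂ)) :
    zn1 m n d = cnorm (flat (flat (one₁ d))) := rfl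

lemma zn1_nonneg (d : Matrix (Fin n) (Fin n) (Matrix (Fin m) (Fin m) ℂ)) :
    0 ≤ zn1 m n d := cnorm_nonneg _

lemma zn1_add_le (a b : Matrix (Fin n) (Fin n) (Matrix (Fin m) (Fin m) ℂ)) :
    zn1 m n (a + b) ≤ zn1 m n a + zn1 m n b := by
  have e : flat (flat (one₁ (a + b))) = flat (flat (one₁ a)) + flat (flat (one₁ b)) := rfl
  rw [zn1_eq, zn1_eq, zn1_eq, e]
  exact cnorm_add_le _ _

lemma zn1_smul (c : ℂ) (a : Matrix (Fin n) (Fin n) (Matrix (Fin m) (Fin m) ℂ)) :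
    zn1 m n (c • a) = ‖c‖ * zn1 m n a := by
  have e : flat (flat (one₁ (c • a))) = c • flat (flat (one₁ a)) := rfl
  rw [zn1_eq, zn1_eq, e]
  exact cnorm_smul _ _

lemma zn1_zero : zn1 m n 0 = 0 := by
  have e : flat (flat (one₁ (0 : Matrix (Fin n) (Fin n) (Matrix (Fin m) (Fin m) ℂ)))) = 0 := rfl
  rw [zn1_eq, e, cnorm_zero]

lemma zn1_sum_le {ι : Type*} (s : Finset ι)
    (f : ι → Matrix (Fin n) (Fin n) (Matrix (Fin m) (Fin m) ℂ)) :
    zn1 m n (∑ i ∈ s, f i) ≤ ∑ i ∈ s, zn1 m n (f i) := by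
  classical
  induction s using Finset.induction with
  | empty => simp [zn1_zero]
  | insert _ _ hx ih =>
    rw [Finset.sum_insert hx, Finset.sum_insert hx]
    exact le_trans (zn1_add_le _ _ _ _) (by linarith)

/-- Entrywise ℓ¹-type bound for matrices in `M_n(M_m)`. -/
def Efun (d : Matrix (Fin n) (Fin n) (Matrix (Fin m) (Fin m) ℂ)) : ℝ :=
  ∑ p, ∑ q, ‖flat (flat (one₁ d)) p q‖

lemma zn1_le_Efun (d : Matrix (Fin n) (Fin n) (Matrix (Fin m) (Fin m) ℂ)) :
    zn1 m n d ≤ Efun m n d := by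
  rw [zn1_eq]
  exact cnorm_le_sum_abs _

lemma Efun_nonneg (d : Matrix (Fin n) (Fin n) (Matrix (Fin m) (Fin m) ℂ)) :
    0 ≤ Efun m n d := by
  apply Finset.sum_nonneg; intro p _
  apply Finset.sum_nonneg; intro q _
  exact norm_nonneg _

lemma tendsto_Efun {ι : Type} (l : Filter ι)
    (ψ : ι → Matrix (Fin n) (Fin n) (Matrix (Fin m) (Fin m) ℂ))
    (d : Matrix (Fin n) (Fin n) (Matrix (Fin m) (Fin m) ℂ))
    (h : Filter.Tendsto ψ l (nhds d)) :
    Filter.Tendsto (fun i => Efun m n (ψ i - d)) l (nhds 0) := by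
  have h4 : ∀ a b u w, Filter.Tendsto (fun i => ψ i a b u w) l (nhds (d a b u w)) := by
    intro a b u w
    have h1 := tendsto_pi_nhds.mp h a
    have h2 := tendsto_pi_nhds.mp h1 b
    have h3 := tendsto_pi_nhds.mp h2 u
    exact tendsto_pi_nhds.mp h3 w
  have hentry : ∀ p q : Fin (1*n*m),
      Filter.Tendsto (fun i => ‖flat (flat (one₁ (ψ i - d))) p q‖) l (nhds 0) := by
    intro p q
    have he : ∀ i, flat (flat (one₁ (ψ i - d))) p q
        = flat (flat (one₁ (ψ i))) p q - flat (flat (one₁ d)) p q := fun _ => rfl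
    have ht : Filter.Tendsto (fun i => flat (flat (one₁ (ψ i))) p q) l
        (nhds (flat (flat (one₁ d)) p q)) := h4 _ _ _ _
    have := (ht.sub (tendsto_const_nhds (x := flat (flat (one₁ d)) p q))).norm
    rw [sub_self, norm_zero] at this
    simpa only [he] using this
  have : Filter.Tendsto (fun i => ∑ p, ∑ q, ‖flat (flat (one₁ (ψ i - d))) p q‖) l
      (nhds (∑ p : Fin (1*n*m), ∑ q : Fin (1*n*m), (0:ℝ))) := by
    apply tendsto_finset_sum
    intro p _
    apply tendsto_finset_sum
    intro q _
    exact hentry p q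
  simp only [Finset.sum_const_zero] at this; exact this

end Aux4
section Aux5

lemma nucVal_nonneg (V W Z : MatNormed) (R : NucRep V W Z) (hZ : 0 ≤ Z.N R.r R.x) :
    0 ≤ nucVal R := by
  unfold nucVal
  have h1 : 0 ≤ rowNorm R.α * dualN V R.f := mul_nonneg (rowNorm_nonneg _) (dualN_nonneg _ _)
  have h2 : 0 ≤ rowNorm R.α * dualN V R.f * dualN W R.g := mul_nonneg h1 (dualN_nonneg _ _)
  exact mul_nonneg (mul_nonneg h2 hZ) (colNorm_nonneg _)

lemma zn1_neg (m n : ℕ) (a : Matrix (Fin n) (Fin n) (Matrix (Fin m) (Fin m) ℂ)) :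
    zn1 m n (-a) = zn1 m n a := by
  have h : (-a) = (-1 : ℂ) • a := by simp
  rw [h, zn1_smul]; simp

lemma zn1_sub_le (m n : ℕ) (a b c : Matrix (Fin n) (Fin n) (Matrix (Fin m) (Fin m) ℂ)) :
    zn1 m n (a - b) ≤ zn1 m n (a - c) + zn1 m n (c - b) := by
  have h : a - b = (a - c) + (c - b) := by abel
  rw [h]
  exact zn1_add_le m n _ _

lemma Efun_sub_comm (m n : ℕ) (x y : Matrix (Fin n) (Fin n) (Matrix (Fin m) (Fin m) ℂ)) :
    Efun m n (x - y) = Efun m n (y - x) := by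
  unfold Efun
  refine Finset.sum_congr rfl fun p _ => Finset.sum_congr rfl fun q _ => ?_
  exact norm_sub_rev _ _

lemma bilin_restrict {A B T : Type} [AddCommGroup A] [Module ℂ A] [AddCommGroup B] [Module ℂ B]
    [AddCommGroup T] [Module ℂ T] (θ : A → B → T) (hθ : IsBilinMap θ)
    (F : Submodule ℂ A) (G : Submodule ℂ B) :
    IsBilinMap (fun (v : ↥F) (w : ↥G) => θ (v : A) (w : B)) := by
  constructor
  · intro w
    constructor
    · intro x y
      show θ ((x + y : ↥F) : A) (w : B) = θ (x : A) (w : B) + θ (y : A) (w : B)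
      have h : ((x + y : ↥F) : A) = (x : A) + (y : A) := rfl
      rw [h]
      exact (hθ.1 (w : B)).1 _ _
    · intro c x
      show θ ((c • x : ↥F) : A) (w : B) = c • θ (x : A) (w : B)
      have h : ((c • x : ↥F) : A) = c • (x : A) := rfl
      rw [h]
      exact (hθ.1 (w : B)).2 _ _
  · intro v
    constructor
    · intro x y
      show θ (v : A) ((x + y : ↥G) : B) = θ (v : A) (x : B) + θ (v : A) (y : B)
      have h : ((x + y : ↥G) : B) = (x : B) + (y : B) := rfl
      rw [h]
      exact (hθ.2 (v : A)).1 _ _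
    · intro c x
      show θ (v : A) ((c • x : ↥G) : B) = c • θ (v : A) (x : B)
      have h : ((c • x : ↥G) : B) = c • (x : B) := rfl
      rw [h]
      exact (hθ.2 (v : A)).2 _ _

lemma bilin_sub {A B T : Type} [AddCommGroup A] [Module ℂ A] [AddCommGroup B] [Module ℂ B]
    [AddCommGroup T] [Module ℂ T] (θ₁ θ₂ : A → B → T) (h₁ : IsBilinMap θ₁)
    (h₂ : IsBilinMap θ₂) : IsBilinMap (fun v w => θ₁ v w - θ₂ v w) := by
  constructor
  · intro w
    refine ⟨fun x y => ?_, fun c x => ?_⟩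
    · show θ₁ (x + y) w - θ₂ (x + y) w = _
      rw [(h₁.1 w).1, (h₂.1 w).1]; exact add_sub_add_comm _ _ _ _
    · show θ₁ (c • x) w - θ₂ (c • x) w = _
      rw [(h₁.1 w).2, (h₂.1 w).2, smul_sub]
  · intro v
    refine ⟨fun x y => ?_, fun c x => ?_⟩
    · show θ₁ v (x + y) - θ₂ v (x + y) = _
      rw [(h₁.2 v).1, (h₂.2 v).1]; exact add_sub_add_comm _ _ _ _
    · show θ₁ v (c • x) - θ₂ v (c • x) = _
      rw [(h₁.2 v).2, (h₂.2 v).2, smul_sub]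

lemma bilin_expand {V' W' T : Type} [AddCommGroup V'] [Module ℂ V'] [AddCommGroup W']
    [Module ℂ W'] [AddCommGroup T] [Module ℂ T] {d₁ d₂ : ℕ} (θ : V' → W' → T)
    (hθ : IsBilinMap θ) (b₁ : Module.Basis (Fin d₁) ℂ V') (b₂ : Module.Basis (Fin d₂) ℂ W') (v : V') (w : W') :
    θ v w = ∑ a, ∑ b, (b₁.repr v a * b₂.repr w b) • θ (b₁ a) (b₂ b) := by
  have L1 : θ v w = ∑ a, b₁.repr v a • θ (b₁ a) w := by
    conv_lhs => rw [← b₁.sum_repr v]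
    let f : V' →ₗ[ℂ] T := IsLinearMap.mk' (fun x => θ x w) (hθ.1 w)
    show f (∑ a, b₁.repr v a • b₁ a) = _
    rw [map_sum]
    exact Finset.sum_congr rfl fun a _ => by rw [map_smul]; rfl
  rw [L1]
  refine Finset.sum_congr rfl fun a _ => ?_
  have L2 : θ (b₁ a) w = ∑ b, b₂.repr w b • θ (b₁ a) (b₂ b) := by
    conv_lhs => rw [← b₂.sum_repr w]
    let g : W' →ₗ[ℂ] T := IsLinearMap.mk' (θ (b₁ a)) (hθ.2 (b₁ a))
    show g (∑ b, b₂.repr w b • b₂ b) = _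
    rw [map_sum]
    exact Finset.sum_congr rfl fun b _ => by rw [map_smul]; rfl
  rw [L2, Finset.smul_sum]
  exact Finset.sum_congr rfl fun b _ => by rw [smul_smul]

end Aux5
set_option maxHeartbeats 1000000 in
/-- a pointwise limit (over a net) of completely nuclear bilinear maps into `M_m`
with nuclear norms uniformly bounded by `C` is completely integral, with `‖φ‖_I ≤ C`. -/
theorem stmt6 (V W : OpSpace) (m n : ℕ) (ι : Type) (l : Filter ι) [l.NeBot] (C : ℝ)
    (hC0 : 0 ≤ C)
    (φs : ι → V.X → W.X → Matrix (Fin n) (Fin n) (Matrix (Fin m) (Fin m) ℂ))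
    (φ : V.X → W.X → Matrix (Fin n) (Fin n) (Matrix (Fin m) (Fin m) ℂ))
    (hbil : ∀ i, IsBilinMap (φs i)) (hφbil : IsBilinMap φ)
    (hjcb : ∃ D, JCBWith V.m W.m ((scalarMN.matLevel m).matLevel n) φ D)
    (hnuc : ∀ i, ∃ D, NucBoundedBy V.m W.m ((scalarMN.matLevel m).matLevel n) (φs i) D)
    (hCn : ∀ i, nucNorm V.m W.m ((scalarMN.matLevel m).matLevel n) (φs i) ≤ C)
    (hconv : ∀ x y, Filter.Tendsto (fun i => φs i x y) l (nhds (φ x y))) :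
    CompletelyIntegral V.m W.m ((scalarMN.matLevel m).matLevel n) φ ∧
      intNorm V.m W.m ((scalarMN.matLevel m).matLevel n) φ ≤ C := by
  classical
  set Z : MatNormed := (scalarMN.matLevel m).matLevel n with hZdef
  have hZN : ∀ (k : ℕ) (A : Matrix (Fin k) (Fin k) Z.X), 0 ≤ Z.N k A := by
    intro k A
    show (0:ℝ) ≤ cnorm (flat (flat A))
    exact cnorm_nonneg _
  suffices H : IntBoundedBy V.m W.m Z φ C by
    exact ⟨⟨hφbil, C, H⟩, csInf_le ⟨0, fun D hD => hD.1⟩ H⟩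
  refine ⟨hC0, fun F₁ F₂ fd₁ fd₂ => ?_⟩
  haveI := fd₁
  haveI := fd₂
  apply le_of_forall_pos_le_add
  intro ε hε
  refine le_trans (csInf_le ⟨0, fun D hD => hD.1⟩
    (?_ : NucBoundedBy (subMN V.m F₁) (subMN W.m F₂) Z
      (fun v w => φ (v : V.X) (w : W.X)) (C + ε))) (le_refl _)
  set d₁ := Module.finrank ℂ ↥F₁ with hd₁def
  set d₂ := Module.finrank ℂ ↥F₂ with hd₂def
  set b₁ : Module.Basis (Fin d₁) ℂ ↥F₁ := Module.finBasis ℂ ↥F₁ with hb₁def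
  set b₂ : Module.Basis (Fin d₂) ℂ ↥F₂ := Module.finBasis ℂ ↥F₂ with hb₂def
  by_cases hL : d₁ * d₂ = 0
  · -- degenerate case: one of the subspaces is trivial
    have hzero : ∀ (v : ↥F₁) (w : ↥F₂), φ (v : V.X) (w : W.X) = 0 := by
      intro v w
      rcases Nat.mul_eq_zero.mp hL with h | h
      · have hv : v = 0 := finrank_zero_iff_forall_zero.mp h v
        rw [hv]
        have h0 : ((0 : ↥F₁) : V.X) = 0 := rfl
        rw [h0]
        exact (hφbil.1 (w : W.X)).map_zero
      · have hw : w = 0 := finrank_zero_iff_forall_zero.mp h w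
        rw [hw]
        have h0 : ((0 : ↥F₂) : W.X) = 0 := rfl
        rw [h0]
        exact (hφbil.2 (v : V.X)).map_zero
    have hfb : ∀ (k : ℕ) (v : Matrix (Fin k) (Fin k) (subMN V.m F₁).X),
        cnorm (dampl (one₁ (0 : ↥F₁ →ₗ[ℂ] ℂ)) v) ≤ 0 * (subMN V.m F₁).N k v := by
      intro k v
      have h : dampl (one₁ (0 : ↥F₁ →ₗ[ℂ] ℂ)) v = 0 := by
        funext p q
        rfl
      rw [h, cnorm_zero, zero_mul]
    have hgb : ∀ (k : ℕ) (w : Matrix (Fin k) (Fin k) (subMN W.m F₂).X),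
        cnorm (dampl (one₁ (0 : ↥F₂ →ₗ[ℂ] ℂ)) w) ≤ 0 * (subMN W.m F₂).N k w := by
      intro k w
      have h : dampl (one₁ (0 : ↥F₂ →ₗ[ℂ] ℂ)) w = 0 := by
        funext p q
        rfl
      rw [h, cnorm_zero, zero_mul]
    set R0 : ℕ → NucRep (subMN V.m F₁) (subMN W.m F₂) Z :=
      fun _ => rankOneRep _ _ _ 0 0 0 ⟨0, le_refl 0, hfb⟩ ⟨0, le_refl 0, hgb⟩ with hR0def
    refine ⟨by positivity, R0, ?_, ?_⟩
    · intro v w ε' hε'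
      refine ⟨0, fun M _ => ?_⟩
      have he : ∀ t ∈ Finset.range M, nucEval (R0 t) v w = (0 : Z.X) := by
        intro t _
        rw [hR0def, rankOneRep_eval]
        simp
      rw [Finset.sum_congr rfl he, Finset.sum_const, smul_zero]
      show zn1 m n (φ (v : V.X) (w : W.X) - 0) < ε'
      rw [hzero v w, sub_zero, zn1_zero]
      exact hε'
    · intro M
      have he : ∀ t ∈ Finset.range M, nucVal (R0 t) ≤ (0:ℝ) := by
        intro t _
        have h := rankOneRep_val_le (subMN V.m F₁) (subMN W.m F₂) Z 0 0 0
          ⟨0, le_refl 0, hfb⟩ ⟨0, le_refl 0, hgb⟩ 0 0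
          (dualN_le _ _ ⟨le_refl 0, hfb⟩) (dualN_le _ _ ⟨le_refl 0, hgb⟩) (hZN 1 _)
        rw [hR0def]
        refine le_trans h ?_
        have hz : Z.N 1 (one₁ (0 : Z.X)) = 0 := zn1_zero m n
        rw [hz]
        norm_num
      calc ∑ t ∈ Finset.range M, nucVal (R0 t) ≤ ∑ t ∈ Finset.range M, (0:ℝ) :=
            Finset.sum_le_sum he
      _ = 0 := by simp
      _ ≤ C + ε := by positivity
  · -- main case
    have hLpos : 0 < d₁ * d₂ := Nat.pos_of_ne_zero hL
    set L := d₁ * d₂ with hLdef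
    -- completely bounded coordinate functionals
    have hex₁ : ∀ a : Fin d₁, ∃ c, 0 ≤ c ∧ ∀ x : ↥F₁,
        ‖b₁.coord a x‖ ≤ c * V.N 1 (fun _ _ => (x : V.X)) :=
      fun a => exists_level1_bound V F₁ fd₁ (b₁.coord a)
    choose κ₁ hκ₁0 hκ₁b using hex₁
    have hex₂ : ∀ b : Fin d₂, ∃ c, 0 ≤ c ∧ ∀ x : ↥F₂,
        ‖b₂.coord b x‖ ≤ c * W.N 1 (fun _ _ => (x : W.X)) :=
      fun b => exists_level1_bound W F₂ fd₂ (b₂.coord b)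
    choose κ₂ hκ₂0 hκ₂b using hex₂
    have hfb₁ : ∀ (a : Fin d₁) (k : ℕ) (v : Matrix (Fin k) (Fin k) (subMN V.m F₁).X),
        cnorm (dampl (one₁ (b₁.coord a)) v) ≤ κ₁ a * (subMN V.m F₁).N k v :=
      fun a k v => funct_cb_bound V F₁ (b₁.coord a) (κ₁ a) (hκ₁0 a) (hκ₁b a) k v
    have hfb₂ : ∀ (b : Fin d₂) (k : ℕ) (w : Matrix (Fin k) (Fin k) (subMN W.m F₂).X),
        cnorm (dampl (one₁ (b₂.coord b)) w) ≤ κ₂ b * (subMN W.m F₂).N k w :=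
      fun b k w => funct_cb_bound W F₂ (b₂.coord b) (κ₂ b) (hκ₂0 b) (hκ₂b b) k w
    have hdual₁ : ∀ a, dualN (subMN V.m F₁) (one₁ (b₁.coord a)) ≤ κ₁ a :=
      fun a => dualN_le _ _ ⟨hκ₁0 a, hfb₁ a⟩
    have hdual₂ : ∀ b, dualN (subMN W.m F₂) (one₁ (b₂.coord b)) ≤ κ₂ b :=
      fun b => dualN_le _ _ ⟨hκ₂0 b, hfb₂ b⟩
    set K : ℝ := ∑ z : Fin d₁ × Fin d₂, κ₁ z.1 * κ₂ z.2 with hKdef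
    have hK0 : 0 ≤ K :=
      Finset.sum_nonneg fun z _ => mul_nonneg (hκ₁0 _) (hκ₂0 _)
    set c0 : ℝ := ε / (8 * (K + 1)) with hc0def
    have hc00 : 0 < c0 := by rw [hc0def]; positivity
    set δ : ℕ → ℝ := fun k => c0 * (1/2)^k with hδdef
    have hδpos : ∀ k, 0 < δ k := fun k => by rw [hδdef]; positivity
    have hδmono : ∀ {k k' : ℕ}, k ≤ k' → δ k' ≤ δ k := by
      intro k k' hk
      rw [hδdef]
      exact mul_le_mul_of_nonneg_left
        (pow_le_pow_of_le_one (by norm_num) (by norm_num) hk) (le_of_lt hc00)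
    -- choose approximating indices
    have hchoice : ∀ k : ℕ, ∃ i : ι, ∀ (a : Fin d₁) (b : Fin d₂),
        Efun m n (φs i (b₁ a : V.X) (b₂ b : W.X) - φ (b₁ a : V.X) (b₂ b : W.X)) < δ k := by
      intro k
      have hev : ∀ᶠ i in l, ∀ z : Fin d₁ × Fin d₂,
          Efun m n (φs i (b₁ z.1 : V.X) (b₂ z.2 : W.X)
            - φ (b₁ z.1 : V.X) (b₂ z.2 : W.X)) < δ k := by
        rw [Filter.eventually_all]
        intro z
        exact (tendsto_Efun m n l _ _
          (hconv (b₁ z.1 : V.X) (b₂ z.2 : W.X))).eventually_lt_const (hδpos k)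
      obtain ⟨i, hi⟩ := hev.exists
      exact ⟨i, fun a b => hi (a, b)⟩
    choose iseq hiseq using hchoice
    set ψ : ℕ → V.X → W.X → Z.X := fun k => φs (iseq k) with hψdef
    -- a good nuclear representation of ψ 0
    obtain ⟨D, hDmem, hDlt⟩ :=
      exists_lt_of_csInf_lt (hnuc (iseq 0))
        (lt_of_le_of_lt (hCn (iseq 0)) (by linarith : C < C + ε/2))
    obtain ⟨hD0, Rf, hRfconv, hRfval⟩ := hDmem
    set R0 : ℕ → NucRep (subMN V.m F₁) (subMN W.m F₂) Z :=
      fun t => restrictRep V.m W.m Z F₁ F₂ (Rf t) with hR0def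
    -- the rank-one "correction" stream
    set pr : ℕ → Fin d₁ × Fin d₂ :=
      fun s => finProdFinEquiv.symm ⟨s % L, Nat.mod_lt s hLpos⟩ with hprdef
    set zval : ℕ → Z.X := fun s =>
      ψ (s / L + 1) (b₁ (pr s).1 : V.X) (b₂ (pr s).2 : W.X)
        - ψ (s / L) (b₁ (pr s).1 : V.X) (b₂ (pr s).2 : W.X) with hzvaldef
    set R1 : ℕ → NucRep (subMN V.m F₁) (subMN W.m F₂) Z := fun s =>
      rankOneRep _ _ _ (b₁.coord (pr s).1) (b₂.coord (pr s).2) (zval s)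
        ⟨κ₁ (pr s).1, hκ₁0 _, hfb₁ _⟩ ⟨κ₂ (pr s).2, hκ₂0 _, hfb₂ _⟩ with hR1def
    set R : ℕ → NucRep (subMN V.m F₁) (subMN W.m F₂) Z := fun t =>
      if t % 2 = 0 then R0 (t / 2) else R1 (t / 2) with hRdef
    have hR2 : ∀ s, R (2*s) = R0 s := by
      intro s
      have e1 : (2*s) % 2 = 0 := by omega
      have e2 : (2*s) / 2 = s := by omega
      simp [hRdef, e1, e2]
    have hR21 : ∀ s, R (2*s+1) = R1 s := by
      intro s
      have e1 : (2*s+1) % 2 = 1 := by omega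
      have e2 : (2*s+1) / 2 = s := by omega
      simp [hRdef, e1, e2]
    -- bound on the correction values
    have hzval : ∀ s, zn1 m n (zval s) ≤ 2 * δ (s / L) := by
      intro s
      rw [hzvaldef]
      refine le_trans (zn1_sub_le m n _ _
        (φ (b₁ (pr s).1 : V.X) (b₂ (pr s).2 : W.X))) ?_
      have h2 : zn1 m n (ψ (s/L+1) (b₁ (pr s).1 : V.X) (b₂ (pr s).2 : W.X)
          - φ (b₁ (pr s).1 : V.X) (b₂ (pr s).2 : W.X)) ≤ δ (s/L+1) :=
        le_trans (zn1_le_Efun m n _) (le_of_lt (hiseq (s/L+1) (pr s).1 (pr s).2))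
      have h3 : zn1 m n (φ (b₁ (pr s).1 : V.X) (b₂ (pr s).2 : W.X)
          - ψ (s/L) (b₁ (pr s).1 : V.X) (b₂ (pr s).2 : W.X)) ≤ δ (s/L) := by
        refine le_trans (zn1_le_Efun m n _) ?_
        rw [Efun_sub_comm]
        exact le_of_lt (hiseq (s/L) (pr s).1 (pr s).2)
      have h4 : δ (s/L+1) ≤ δ (s/L) := hδmono (Nat.le_succ _)
      linarith
    have hval1 : ∀ s, nucVal (R1 s) ≤ κ₁ (pr s).1 * κ₂ (pr s).2 * (2 * δ (s / L)) := by
      intro s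
      rw [hR1def]
      refine le_trans (rankOneRep_val_le _ _ _ _ _ _ _ _ (κ₁ (pr s).1) (κ₂ (pr s).2)
        (hdual₁ _) (hdual₂ _) (hZN 1 _)) ?_
      exact mul_le_mul_of_nonneg_left (hzval s) (mul_nonneg (hκ₁0 _) (hκ₂0 _))
    have hval0 : ∀ s, nucVal (R0 s) ≤ nucVal (Rf s) := by
      intro s
      rw [hR0def]
      exact restrictRep_val _ _ _ _ _ _ (hZN _ _)
    -- total bound for the correction stream
    have hprblock : ∀ (k : ℕ) (j : Fin L), pr (L*k + (j : ℕ)) = finProdFinEquiv.symm j := by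
      intro k j
      have hmod : (L*k + (j:ℕ)) % L = (j:ℕ) := by
        rw [Nat.mul_add_mod, Nat.mod_eq_of_lt j.isLt]
      have hfin : (⟨(L*k+(j:ℕ)) % L, Nat.mod_lt _ hLpos⟩ : Fin L) = j := Fin.ext hmod
      rw [hprdef]
      show finProdFinEquiv.symm ⟨(L*k+(j:ℕ)) % L, Nat.mod_lt _ hLpos⟩ = finProdFinEquiv.symm j
      rw [hfin]
    have hdivblock : ∀ (k : ℕ) (j : Fin L), (L*k + (j : ℕ)) / L = k := by
      intro k j
      rw [Nat.mul_add_div hLpos, Nat.div_eq_of_lt j.isLt, add_zero]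
    have hoddsum : ∀ u, ∑ s ∈ Finset.range u, nucVal (R1 s) ≤ ε / 2 := by
      intro u
      have hterm : ∀ s, 0 ≤ nucVal (R1 s) := by
        intro s
        rw [hR1def]
        exact nucVal_nonneg _ _ _ _ (hZN _ _)
      have hmono : ∑ s ∈ Finset.range u, nucVal (R1 s)
          ≤ ∑ s ∈ Finset.range (L*(u+1)), nucVal (R1 s) := by
        apply Finset.sum_le_sum_of_subset_of_nonneg
        · apply Finset.range_subset_range.mpr
          calc u ≤ u + 1 := Nat.le_succ u
          _ ≤ L * (u+1) := Nat.le_mul_of_pos_left _ hLpos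
        · exact fun t _ _ => hterm t
      refine le_trans hmono ?_
      rw [sum_range_mul_block (fun s => nucVal (R1 s)) L (u+1)]
      have hblock : ∀ k, ∑ j ∈ Finset.range L, nucVal (R1 (L*k + j)) ≤ K * (2 * δ k) := by
        intro k
        have h1 : ∑ j ∈ Finset.range L, nucVal (R1 (L*k + j))
            ≤ ∑ j ∈ Finset.range L, κ₁ (pr (L*k+j)).1 * κ₂ (pr (L*k+j)).2 * (2 * δ k) := by
          apply Finset.sum_le_sum
          intro j hj
          have hjL : j < L := Finset.mem_range.mp hj
          have := hval1 (L*k+j)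
          rwa [hdivblock k ⟨j, hjL⟩] at this
        refine le_trans h1 ?_
        rw [← Finset.sum_mul]
        apply mul_le_mul_of_nonneg_right _ (by positivity)
        rw [Finset.sum_range (fun j => κ₁ (pr (L*k+j)).1 * κ₂ (pr (L*k+j)).2)]
        have h2 : ∀ j : Fin L, κ₁ (pr (L*k+(j:ℕ))).1 * κ₂ (pr (L*k+(j:ℕ))).2
            = κ₁ ((finProdFinEquiv.symm j).1) * κ₂ ((finProdFinEquiv.symm j).2) := by
          intro j
          rw [hprblock k j]
        rw [Finset.sum_congr rfl (fun j _ => h2 j)]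
        rw [Equiv.sum_comp finProdFinEquiv.symm (fun z : Fin d₁ × Fin d₂ => κ₁ z.1 * κ₂ z.2)]
      refine le_trans (Finset.sum_le_sum (fun k _ => hblock k)) ?_
      have h3 : ∑ k ∈ Finset.range (u+1), K * (2 * δ k)
          = (2*K*c0) * ∑ k ∈ Finset.range (u+1), (1/2:ℝ)^k := by
        rw [Finset.mul_sum]
        refine Finset.sum_congr rfl (fun k _ => ?_)
        rw [hδdef]
        ring
      rw [h3]
      have h4 : (2*K*c0) * ∑ k ∈ Finset.range (u+1), (1/2:ℝ)^k ≤ (2*K*c0) * 2 := by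
        apply mul_le_mul_of_nonneg_left (sum_geometric_two_le _) (by positivity)
      refine le_trans h4 ?_
      rw [hc0def]
      rw [show 2*K*(ε/(8*(K+1)))*2 = (4*K*ε)/(8*(K+1)) from by ring]
      rw [div_le_iff₀ (by positivity : (0:ℝ) < 8*(K+1))]
      nlinarith [mul_nonneg hK0 (le_of_lt hε)]
    -- part A : the value bound
    have hpartA : ∀ M, ∑ t ∈ Finset.range M, nucVal (R t) ≤ C + ε := by
      intro M
      have hnn : ∀ t, 0 ≤ nucVal (R t) := by
        intro t
        rw [hRdef]
        dsimp only
        split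
        · rw [hR0def]; exact nucVal_nonneg _ _ _ _ (hZN _ _)
        · rw [hR1def]; exact nucVal_nonneg _ _ _ _ (hZN _ _)
      calc ∑ t ∈ Finset.range M, nucVal (R t) ≤ ∑ t ∈ Finset.range (2*M), nucVal (R t) := by
            apply Finset.sum_le_sum_of_subset_of_nonneg
              (Finset.range_subset_range.mpr (by omega)) (fun t _ _ => hnn t)
      _ = ∑ s ∈ Finset.range M, (nucVal (R (2*s)) + nucVal (R (2*s+1))) :=
            sum_range_two_mul _ M
      _ = ∑ s ∈ Finset.range M, nucVal (R0 s) + ∑ s ∈ Finset.range M, nucVal (R1 s) := by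
            rw [← Finset.sum_add_distrib]
            exact Finset.sum_congr rfl (fun s _ => by rw [hR2 s, hR21 s])
      _ ≤ D + ε/2 := by
            apply add_le_add _ (hoddsum M)
            exact le_trans (Finset.sum_le_sum (fun s _ => hval0 s)) (hRfval M)
      _ ≤ C + ε := by linarith
    -- part B : the convergence
    have hpartB : ∀ (v : ↥F₁) (w : ↥F₂),
        NSum Z (fun t => nucEval (R t) v w) (φ (v : V.X) (w : W.X)) := by
      intro v w
      set cf : Fin d₁ → ℂ := fun a => b₁.repr v a with hcfdef
      set cg : Fin d₂ → ℂ := fun b => b₂.repr w b with hcgdef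
      set Mvw : ℝ := ∑ z : Fin d₁ × Fin d₂, ‖cf z.1‖ * ‖cg z.2‖ with hMvwdef
      have hMvw0 : 0 ≤ Mvw :=
        Finset.sum_nonneg fun z _ => mul_nonneg (norm_nonneg _) (norm_nonneg _)
      have hevalR1 : ∀ s, nucEval (R1 s) v w = (cf (pr s).1 * cg (pr s).2) • zval s := by
        intro s
        rw [hR1def]
        dsimp only
        rw [rankOneRep_eval, hcfdef, hcgdef]
        simp [Module.Basis.coord_apply]
      have hevalR0 : ∀ s, nucEval (R0 s) v w = nucEval (Rf s) (v : V.X) (w : W.X) :=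
        fun s => rfl
      have hexpand : ∀ (θ : V.X → W.X → Z.X), IsBilinMap θ → θ (v : V.X) (w : W.X)
          = ∑ z : Fin d₁ × Fin d₂, (cf z.1 * cg z.2) •
            θ (b₁ z.1 : V.X) (b₂ z.2 : W.X) := by
        intro θ hθ
        have hres := bilin_restrict θ hθ F₁ F₂
        have h := bilin_expand _ hres b₁ b₂ v w
        rw [Fintype.sum_prod_type]
        exact h
      have hBfull : ∀ N, ∑ s ∈ Finset.range (L*N), nucEval (R1 s) v w
          = ψ N (v : V.X) (w : W.X) - ψ 0 (v : V.X) (w : W.X) := by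
        intro N
        rw [sum_range_mul_block (fun s => nucEval (R1 s) v w) L N]
        have hblock : ∀ k, ∑ j ∈ Finset.range L, nucEval (R1 (L*k + j)) v w
            = ψ (k+1) (v : V.X) (w : W.X) - ψ k (v : V.X) (w : W.X) := by
          intro k
          have hθ : IsBilinMap (fun x y => ψ (k+1) x y - ψ k x y) :=
            bilin_sub _ _ (hbil _) (hbil _)
          have hx' : ψ (k+1) (v : V.X) (w : W.X) - ψ k (v : V.X) (w : W.X)
              = ∑ z : Fin d₁ × Fin d₂, (cf z.1 * cg z.2) •
                (ψ (k+1) (b₁ z.1 : V.X) (b₂ z.2 : W.X)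
                  - ψ k (b₁ z.1 : V.X) (b₂ z.2 : W.X)) := hexpand _ hθ
          have h5 : ∀ j : Fin L, nucEval (R1 (L*k + (j:ℕ))) v w
              = (fun z : Fin d₁ × Fin d₂ => (cf z.1 * cg z.2) •
                  (ψ (k+1) (b₁ z.1 : V.X) (b₂ z.2 : W.X)
                    - ψ k (b₁ z.1 : V.X) (b₂ z.2 : W.X))) (finProdFinEquiv.symm j) := by
            intro j
            rw [hevalR1, hzvaldef]
            dsimp only
            rw [hprblock k j, hdivblock k j]
          rw [Finset.sum_range (fun j => nucEval (R1 (L*k + j)) v w)]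
          rw [Finset.sum_congr rfl (fun j _ => h5 j)]
          rw [Equiv.sum_comp finProdFinEquiv.symm
            (fun z : Fin d₁ × Fin d₂ => (cf z.1 * cg z.2) •
              (ψ (k+1) (b₁ z.1 : V.X) (b₂ z.2 : W.X)
                - ψ k (b₁ z.1 : V.X) (b₂ z.2 : W.X)))]
          exact hx'.symm
        rw [Finset.sum_congr rfl (fun k _ => hblock k)]
        exact Finset.sum_range_sub (fun k => ψ k (v : V.X) (w : W.X)) N
      have hdiff : ∀ N, zn1 m n (φ (v:V.X) (w:W.X) - ψ N (v:V.X) (w:W.X)) ≤ Mvw * δ N := by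
        intro N
        have hθ : IsBilinMap (fun x y => φ x y - ψ N x y) := bilin_sub _ _ hφbil (hbil _)
        have hx' : φ (v : V.X) (w : W.X) - ψ N (v : V.X) (w : W.X)
            = ∑ z : Fin d₁ × Fin d₂, (cf z.1 * cg z.2) •
              (φ (b₁ z.1 : V.X) (b₂ z.2 : W.X)
                - ψ N (b₁ z.1 : V.X) (b₂ z.2 : W.X)) := hexpand _ hθ
        rw [hx']
        refine le_trans (zn1_sum_le m n _ _) ?_
        have h6 : ∀ z : Fin d₁ × Fin d₂, zn1 m n ((cf z.1 * cg z.2) •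
            (φ (b₁ z.1 : V.X) (b₂ z.2 : W.X) - ψ N (b₁ z.1 : V.X) (b₂ z.2 : W.X)))
            ≤ (‖cf z.1‖ * ‖cg z.2‖) * δ N := by
          intro z
          rw [zn1_smul, norm_mul]
          apply mul_le_mul_of_nonneg_left _ (mul_nonneg (norm_nonneg _) (norm_nonneg _))
          refine le_trans (zn1_le_Efun m n _) ?_
          rw [Efun_sub_comm]
          exact le_of_lt (hiseq N z.1 z.2)
        refine le_trans (Finset.sum_le_sum (fun z _ => h6 z)) ?_
        rw [← Finset.sum_mul]
      have hitem : ∀ s, zn1 m n (nucEval (R1 s) v w) ≤ Mvw * (2 * δ (s / L)) := by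
        intro s
        rw [hevalR1 s, zn1_smul, norm_mul]
        have h1 : ‖cf (pr s).1‖ * ‖cg (pr s).2‖ ≤ Mvw :=
          Finset.single_le_sum (f := fun z : Fin d₁ × Fin d₂ => ‖cf z.1‖ * ‖cg z.2‖)
            (fun z _ => mul_nonneg (norm_nonneg _) (norm_nonneg _)) (Finset.mem_univ (pr s))
        exact mul_le_mul h1 (hzval s) (zn1_nonneg m n _) hMvw0
      set Cq : ℝ := Mvw + 2*(L:ℝ)*Mvw with hCqdef
      have hCq0 : 0 ≤ Cq := by rw [hCqdef]; positivity
      have hBpart : ∀ u, zn1 m n ((φ (v:V.X) (w:W.X) - ψ 0 (v:V.X) (w:W.X))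
          - ∑ s ∈ Finset.range u, nucEval (R1 s) v w) ≤ Cq * δ (u / L) := by
        intro u
        have hu : u = L*(u/L) + u % L := (Nat.div_add_mod u L).symm
        have hsplit : ∑ s ∈ Finset.range u, nucEval (R1 s) v w
            = (ψ (u/L) (v:V.X) (w:W.X) - ψ 0 (v:V.X) (w:W.X))
              + ∑ j ∈ Finset.range (u % L), nucEval (R1 (L*(u/L) + j)) v w := by
          conv_lhs => rw [hu]
          rw [Finset.sum_range_add, hBfull]
        rw [hsplit]
        have heq : (φ (v:V.X) (w:W.X) - ψ 0 (v:V.X) (w:W.X))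
            - ((ψ (u/L) (v:V.X) (w:W.X) - ψ 0 (v:V.X) (w:W.X))
              + ∑ j ∈ Finset.range (u % L), nucEval (R1 (L*(u/L) + j)) v w)
            = (φ (v:V.X) (w:W.X) - ψ (u/L) (v:V.X) (w:W.X))
              + -(∑ j ∈ Finset.range (u % L), nucEval (R1 (L*(u/L) + j)) v w) := by abel
        rw [heq]
        refine le_trans (zn1_add_le m n _ _) ?_
        have hP : zn1 m n (-(∑ j ∈ Finset.range (u % L), nucEval (R1 (L*(u/L) + j)) v w))
            ≤ 2*(L:ℝ)*Mvw * δ (u/L) := by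
          rw [zn1_neg]
          refine le_trans (zn1_sum_le m n _ _) ?_
          have h6 : ∀ j ∈ Finset.range (u % L),
              zn1 m n (nucEval (R1 (L*(u/L) + j)) v w) ≤ Mvw * (2 * δ (u/L)) := by
            intro j hj
            have hjL : j < L := lt_of_lt_of_le (Finset.mem_range.mp hj)
              (le_of_lt (Nat.mod_lt u hLpos))
            have h7 := hitem (L*(u/L) + j)
            rwa [hdivblock (u/L) ⟨j, hjL⟩] at h7
          refine le_trans (Finset.sum_le_sum h6) ?_
          rw [Finset.sum_const, Finset.card_range, nsmul_eq_mul]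
          have h7 : ((u % L : ℕ) : ℝ) ≤ (L:ℝ) := Nat.cast_le.mpr (le_of_lt (Nat.mod_lt u hLpos))
          calc ((u % L : ℕ) : ℝ) * (Mvw * (2 * δ (u/L)))
              ≤ (L:ℝ) * (Mvw * (2 * δ (u/L))) := by
                apply mul_le_mul_of_nonneg_right h7
                exact mul_nonneg hMvw0 (mul_nonneg (by norm_num) (le_of_lt (hδpos _)))
          _ = 2*(L:ℝ)*Mvw * δ (u/L) := by ring
        calc zn1 m n (φ (v:V.X) (w:W.X) - ψ (u/L) (v:V.X) (w:W.X))
            + zn1 m n (-(∑ j ∈ Finset.range (u % L), nucEval (R1 (L*(u/L) + j)) v w))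
            ≤ Mvw * δ (u/L) + 2*(L:ℝ)*Mvw * δ (u/L) := add_le_add (hdiff (u/L)) hP
        _ = Cq * δ (u/L) := by rw [hCqdef]; ring
      -- assemble the convergence statement
      intro ε' hε'
      obtain ⟨M₁, hM₁⟩ := hRfconv (v : V.X) (w : W.X) (ε'/2) (by linarith)
      obtain ⟨N₀, hN₀⟩ := exists_pow_lt_of_lt_one
        (show (0:ℝ) < ε'/2/(Cq*c0+1) by positivity) (by norm_num : (1/2:ℝ) < 1)
      have hqc0 : 0 ≤ Cq * c0 := mul_nonneg hCq0 (le_of_lt hc00)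
      have hkey : ∀ N, N₀ ≤ N → Cq * δ N < ε'/2 := by
        intro N hN
        have h1 : (1/2:ℝ)^N ≤ (1/2)^N₀ :=
          pow_le_pow_of_le_one (by norm_num) (by norm_num) hN
        calc Cq * δ N = (Cq*c0) * (1/2)^N := by rw [hδdef]; ring
        _ ≤ (Cq*c0+1) * (1/2)^N₀ := by
              apply mul_le_mul (by linarith) h1 (by positivity) (by linarith)
        _ < (Cq*c0+1) * (ε'/2/(Cq*c0+1)) := by
              apply mul_lt_mul_of_pos_left hN₀
              linarith
        _ = ε'/2 := by field_simp
      set mx := max M₁ (L * N₀) with hmxdef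
      have hmax1 : M₁ ≤ mx := le_max_left _ _
      have hmax2 : L * N₀ ≤ mx := le_max_right _ _
      refine ⟨2 * mx + 2, fun M hM => ?_⟩
      show zn1 m n (φ (v:V.X) (w:W.X) - ∑ t ∈ Finset.range M, nucEval (R t) v w) < ε'
      have hsplit2 : ∃ u₁ u₂, (∑ t ∈ Finset.range M, nucEval (R t) v w
          = ∑ s ∈ Finset.range u₁, nucEval (R0 s) v w
            + ∑ s ∈ Finset.range u₂, nucEval (R1 s) v w) ∧ M₁ ≤ u₁ ∧ L*N₀ ≤ u₂ := by
        rcases Nat.even_or_odd M with ⟨u, hu⟩ | ⟨u, hu⟩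
        · refine ⟨u, u, ?_, by omega, by omega⟩
          have h2u : M = 2*u := by omega
          rw [h2u, sum_range_two_mul, Finset.sum_add_distrib]
          congr 1
          · exact Finset.sum_congr rfl (fun s _ => by rw [hR2 s])
          · exact Finset.sum_congr rfl (fun s _ => by rw [hR21 s])
        · refine ⟨u+1, u, ?_, by omega, by omega⟩
          have h2u : M = 2*u+1 := by omega
          have hs1 : ∑ s ∈ Finset.range u, nucEval (R (2*s)) v w
              = ∑ s ∈ Finset.range u, nucEval (R0 s) v w :=
            Finset.sum_congr rfl (fun s _ => by rw [hR2 s])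
          have hs2 : ∑ s ∈ Finset.range u, nucEval (R (2*s+1)) v w
              = ∑ s ∈ Finset.range u, nucEval (R1 s) v w :=
            Finset.sum_congr rfl (fun s _ => by rw [hR21 s])
          rw [h2u, Finset.sum_range_succ, sum_range_two_mul, Finset.sum_add_distrib, hs1, hs2,
            hR2 u, Finset.sum_range_succ (fun s => nucEval (R0 s) v w) u]
          abel
      obtain ⟨u₁, u₂, hsum, hu₁, hu₂⟩ := hsplit2
      rw [hsum]
      have heq2 : φ (v:V.X) (w:W.X) - (∑ s ∈ Finset.range u₁, nucEval (R0 s) v w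
          + ∑ s ∈ Finset.range u₂, nucEval (R1 s) v w)
          = (ψ 0 (v:V.X) (w:W.X) - ∑ s ∈ Finset.range u₁, nucEval (R0 s) v w)
            + ((φ (v:V.X) (w:W.X) - ψ 0 (v:V.X) (w:W.X))
              - ∑ s ∈ Finset.range u₂, nucEval (R1 s) v w) := by abel
      rw [heq2]
      refine lt_of_le_of_lt (zn1_add_le m n _ _) ?_
      have hA : zn1 m n (ψ 0 (v:V.X) (w:W.X)
          - ∑ s ∈ Finset.range u₁, nucEval (R0 s) v w) < ε'/2 := by
        rw [Finset.sum_congr rfl (fun s _ => hevalR0 s)]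
        exact hM₁ u₁ hu₁
      have hBb : zn1 m n ((φ (v:V.X) (w:W.X) - ψ 0 (v:V.X) (w:W.X))
          - ∑ s ∈ Finset.range u₂, nucEval (R1 s) v w) < ε'/2 := by
        refine lt_of_le_of_lt (hBpart u₂) (hkey (u₂/L) ?_)
        rw [Nat.le_div_iff_mul_le hLpos, mul_comm]
        exact hu₂
      linarith
    exact ⟨by positivity, R, hpartB, hpartA⟩
end
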